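/- arXiv:1808.06647 — 6 statements merged into one kernel-verified Lean document; each statement's English description precedes it below -/
import Mathlib

section
/- For r ∈ (0,1), the maximum of |Re φ(z)| over the closed disc {|z| ≤ r} equals (4/π)·arctan r, where φ is the conformal map from the unit disc onto the strip S with φ(0)=0, φ'(0)>0. -/
open Complex Set

/-- The strip `S = {z : -1 < Re z < 1}`. -/
def stripS : Set ℂ := {z : ℂ | -1 < z.re ∧ z.re < 1}

/-- The unit disc. -/
def discU : Set ℂ := {z : ℂ | ‖z‖ < 1}

/-- Hyperbolic density of the strip. -/
noncomputable def rhoS (z : ℂ) : ℝ := (Real.pi / 2) / Real.cos (Real.pi / 2 * z.re)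

/-- Hyperbolic density of the unit disc. -/
noncomputable def rhoU (z : ℂ) : ℝ := 2 / (1 - ‖z‖ ^ 2)

/-- Hyperbolic length of a curve in the strip. -/
noncomputable def hypLenS (γ : ℝ → ℂ) : ℝ := ∫ t in (0:ℝ)..1, rhoS (γ t) * ‖deriv γ t‖

/-- Hyperbolic length of a curve in the disc. -/
noncomputable def hypLenU (γ : ℝ → ℂ) : ℝ := ∫ t in (0:ℝ)..1, rhoU (γ t) * ‖deriv γ t‖

/-- Hyperbolic distance on the strip: infimum of hyperbolic lengths of C¹ curves. -/
noncomputable def dS (z₁ z₂ : ℂ) : ℝ :=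
  sInf { L : ℝ | ∃ γ : ℝ → ℂ, ContDiffOn ℝ 1 γ (Icc 0 1) ∧ γ 0 = z₁ ∧ γ 1 = z₂ ∧
    (∀ t ∈ Icc (0:ℝ) 1, γ t ∈ stripS) ∧ L = hypLenS γ }

/-- Hyperbolic distance on the unit disc. -/
noncomputable def dU (z₁ z₂ : ℂ) : ℝ :=
  sInf { L : ℝ | ∃ γ : ℝ → ℂ, ContDiffOn ℝ 1 γ (Icc 0 1) ∧ γ 0 = z₁ ∧ γ 1 = z₂ ∧
    (∀ t ∈ Icc (0:ℝ) 1, γ t ∈ discU) ∧ L = hypLenU γ }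

/-- The conformal map of the disc onto the strip, inverse of `z ↦ tan (π z / 4)`. -/
noncomputable def phiUS (z : ℂ) : ℂ :=
  (-(2 * Complex.I) / (Real.pi : ℂ)) * Complex.log ((1 + Complex.I * z) / (1 - Complex.I * z))

/-- Inverse hyperbolic tangent. -/
noncomputable def artanh (r : ℝ) : ℝ := Real.log ((1 + r) / (1 - r)) / 2

/-- A real-valued function is harmonic on a set. -/
def HarmonicOnR (u : ℂ → ℝ) (s : Set ℂ) : Prop :=
  ContDiffOn ℝ 2 u s ∧ ∀ z ∈ s,
    fderiv ℝ (fun w => fderiv ℝ u w 1) z 1 + fderiv ℝ (fun w => fderiv ℝ u w Complex.I) z Complex.I = 0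

/-- A complex-valued function is harmonic on a set. -/
def HarmonicOnC (f : ℂ → ℂ) (s : Set ℂ) : Prop :=
  ContDiffOn ℝ 2 f s ∧ ∀ z ∈ s,
    fderiv ℝ (fun w => fderiv ℝ f w 1) z 1 + fderiv ℝ (fun w => fderiv ℝ f w Complex.I) z Complex.I = 0

/-- Wirtinger derivative ∂f/∂z. -/
noncomputable def wderiv (f : ℂ → ℂ) (z : ℂ) : ℂ :=
  (fderiv ℝ f z 1 - Complex.I * fderiv ℝ f z Complex.I) / 2

/-- Wirtinger derivative ∂f/∂z̄. -/
noncomputable def wderivBar (f : ℂ → ℂ) (z : ℂ) : ℂ :=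
  (fderiv ℝ f z 1 + Complex.I * fderiv ℝ f z Complex.I) / 2

/-- Sense-preserving K-quasiregular C¹ map on a set. -/
def QRegOn (K : ℝ) (f : ℂ → ℂ) (s : Set ℂ) : Prop :=
  ContDiffOn ℝ 1 f s ∧ ∀ z ∈ s,
    ‖wderivBar f z‖ < ‖wderiv f z‖ ∧
    ‖wderiv f z‖ + ‖wderivBar f z‖
      ≤ K * (‖wderiv f z‖ - ‖wderivBar f z‖)
lemma arg_eq_arctan {w : ℂ} (h : 0 < w.re) : w.arg = Real.arctan (w.im / w.re) := by
  have h2 := abs_lt.mp (Complex.abs_arg_lt_pi_div_two_iff.mpr (Or.inl h))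
  rw [← Complex.tan_arg, Real.arctan_tan h2.1 h2.2]

lemma re_phi (z : ℂ) (hz : z.re ^ 2 + z.im ^ 2 < 1) :
    (phiUS z).re = (2 / Real.pi) * Real.arctan (2 * z.re / (1 - z.re ^ 2 - z.im ^ 2)) := by
  set x := z.re with hx; set y := z.im with hy
  set w : ℂ := (1 + Complex.I * z) / (1 - Complex.I * z) with hw
  have hD : 0 < Complex.normSq (1 - Complex.I * z) := by
    rw [Complex.normSq_pos]
    intro h0
    have h1 : (1 - Complex.I * z).re = 0 := by rw [h0]; simp
    have h2 : (1 - Complex.I * z).im = 0 := by rw [h0]; simp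
    simp [Complex.sub_re, Complex.mul_re, Complex.sub_im, Complex.mul_im, ← hx, ← hy] at h1 h2
    nlinarith
  set D := Complex.normSq (1 - Complex.I * z) with hDdef
  have hwre : w.re = (1 - x ^ 2 - y ^ 2) / D := by
    rw [hw, Complex.div_re]
    simp only [Complex.add_re, Complex.add_im, Complex.sub_re, Complex.sub_im,
      Complex.mul_re, Complex.mul_im, Complex.one_re, Complex.one_im, Complex.I_re,
      Complex.I_im, ← hx, ← hy, ← hDdef]
    ring
  have hwim : w.im = 2 * x / D := by
    rw [hw, Complex.div_im]
    simp only [Complex.add_re, Complex.add_im, Complex.sub_re, Complex.sub_im,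
      Complex.mul_re, Complex.mul_im, Complex.one_re, Complex.one_im, Complex.I_re,
      Complex.I_im, ← hx, ← hy, ← hDdef]
    ring
  have hnum : 0 < 1 - x ^ 2 - y ^ 2 := by linarith
  have hwrepos : 0 < w.re := by rw [hwre]; positivity
  have harg : w.arg = Real.arctan (2 * x / (1 - x ^ 2 - y ^ 2)) := by
    rw [arg_eq_arctan hwrepos, hwre, hwim]
    congr 1
    field_simp
  have : (phiUS z).re = (2 / Real.pi) * w.arg := by
    rw [phiUS, ← hw, Complex.mul_re]
    have h1 : (-(2 * Complex.I) / (Real.pi : ℂ)).re = 0 := by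
      simp [Complex.div_re, Complex.normSq_apply]
    have h2 : (-(2 * Complex.I) / (Real.pi : ℂ)).im = -(2 / Real.pi) := by
      simp [Complex.div_im, Complex.normSq_apply]
      rcases eq_or_ne Real.pi 0 with h | h
      · simp [h]
      · field_simp
    rw [h1, h2, Complex.log_im]
    ring
  rw [this, harg]

/-- `max {|Re φ(z)| : |z| ≤ r} = (4/π) arctan r`. -/
theorem max_re_phiUS (r : ℝ) (hr : r ∈ Set.Ioo (0:ℝ) 1) :
    IsGreatest {x : ℝ | ∃ z : ℂ, ‖z‖ ≤ r ∧ x = |(phiUS z).re|}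
      ((4 / Real.pi) * Real.arctan r) := by
  obtain ⟨hr0, hr1⟩ := hr
  have hpi := Real.pi_pos
  have hkey : Real.arctan (2 * r / (1 - r ^ 2)) = 2 * Real.arctan r := by
    have h := Real.arctan_add (x := r) (y := r) (by nlinarith)
    have e : 2*r/(1-r^2) = (r+r)/(1-r*r) := by ring
    rw [e, ← h]
    ring
  constructor
  · refine ⟨(r : ℂ), ?_, ?_⟩
    · simp [_root_.abs_of_pos hr0]
    · rw [re_phi (r : ℂ) (by simp only [Complex.ofReal_re, Complex.ofReal_im]; nlinarith)]
      simp only [Complex.ofReal_re, Complex.ofReal_im]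
      rw [show (2 : ℝ) * r / (1 - r ^ 2 - 0 ^ 2) = 2 * r / (1 - r ^ 2) by ring_nf, hkey]
      have : (0:ℝ) ≤ Real.arctan r := by
        rw [← Real.arctan_zero]; exact Real.arctan_strictMono.monotone hr0.le
      rw [_root_.abs_of_nonneg (by positivity)]
      ring
  · rintro x ⟨z, hzr, rfl⟩
    have hsq : z.re ^ 2 + z.im ^ 2 ≤ r ^ 2 := by
      have := Complex.sq_norm z
      rw [Complex.normSq_apply] at this
      nlinarith [pow_le_pow_left₀ (norm_nonneg z) hzr 2]
    have hz : z.re ^ 2 + z.im ^ 2 < 1 := lt_of_le_of_lt hsq (by nlinarith)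
    rw [re_phi z hz]
    have hxr : |z.re| ≤ r := le_trans (Complex.abs_re_le_norm z) hzr
    have hden : 0 < 1 - z.re ^ 2 - z.im ^ 2 := by linarith
    have hbound : |2 * z.re / (1 - z.re ^ 2 - z.im ^ 2)| ≤ 2 * r / (1 - r ^ 2) := by
      rw [abs_div, _root_.abs_of_pos hden, abs_mul, _root_.abs_two]
      rw [div_le_div_iff₀ hden (by nlinarith)]
      nlinarith [abs_nonneg z.re, _root_.sq_abs z.re]
    have habs : |Real.arctan (2 * z.re / (1 - z.re ^ 2 - z.im ^ 2))|
        ≤ 2 * Real.arctan r := by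
      rw [← hkey]
      rcases le_or_gt 0 (2 * z.re / (1 - z.re ^ 2 - z.im ^ 2)) with h | h
      · rw [_root_.abs_of_nonneg (by rw [← Real.arctan_zero]; exact Real.arctan_strictMono.monotone h)]
        exact Real.arctan_strictMono.monotone (le_trans (le_abs_self _) hbound)
      · rw [_root_.abs_of_neg (by rw [← Real.arctan_zero]; exact Real.arctan_strictMono h), ← Real.arctan_neg]
        exact Real.arctan_strictMono.monotone (le_trans (neg_le_abs _) hbound)
    calc |2 / Real.pi * Real.arctan (2 * z.re / (1 - z.re ^ 2 - z.im ^ 2))|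
        = (2 / Real.pi) * |Real.arctan (2 * z.re / (1 - z.re ^ 2 - z.im ^ 2))| := by
          rw [abs_mul, _root_.abs_of_pos (by positivity)]
      _ ≤ (2 / Real.pi) * (2 * Real.arctan r) := by
          exact mul_le_mul_of_nonneg_left habs (by positivity)
      _ = 4 / Real.pi * Real.arctan r := by ring
end

section
/- For λ > 0, the maximum Euclidean distance from 0 over the closed hyperbolic disc in the strip S centered (hyperbolically) at 0 with hyperbolic radius λ equals (2/π)·λ; i.e., max{|z| : z ∈ S, d_S(z,0) ≤ λ} = 2λ/π. -/
open Complex Set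

section Aux

open MeasureTheory intervalIntegral

lemma stripS_rhoS_ge {z : ℂ} (hz : z ∈ stripS) : Real.pi / 2 ≤ rhoS z := by
  obtain ⟨h1, h2⟩ := hz
  have hpi := Real.pi_pos
  have hc : 0 < Real.cos (Real.pi / 2 * z.re) := by
    apply Real.cos_pos_of_mem_Ioo
    constructor <;> nlinarith
  have hc1 : Real.cos (Real.pi / 2 * z.re) ≤ 1 := Real.cos_le_one _
  rw [rhoS, le_div_iff₀ hc]
  nlinarith

lemma seg_mem_stripS {z : ℂ} (hz : z ∈ stripS) {t : ℝ} (ht : t ∈ Icc (0:ℝ) 1) :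
    (1 - t) • z ∈ stripS := by
  obtain ⟨h1, h2⟩ := hz
  obtain ⟨ht0, ht1⟩ := ht
  constructor <;> simp only [Complex.real_smul, Complex.mul_re, Complex.ofReal_re,
    Complex.ofReal_im, zero_mul, sub_zero] <;> nlinarith

lemma seg_contDiff (z : ℂ) : ContDiff ℝ 1 (fun s : ℝ => (1 - s) • z) :=
  (contDiff_const.sub contDiff_id).smul contDiff_const

lemma seg_deriv (z : ℂ) (t : ℝ) : deriv (fun s : ℝ => (1 - s) • z) t = -z := by
  have h : HasDerivAt (fun s : ℝ => (1 - s) • z) ((-1 : ℝ) • z) t :=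
    ((hasDerivAt_id t).const_sub 1).smul_const z
  simpa using h.deriv

lemma hypLenS_seg {z : ℂ} (hz : z.re = 0) :
    hypLenS (fun s : ℝ => (1 - s) • z) = Real.pi / 2 * ‖z‖ := by
  unfold hypLenS
  have h : ∀ t : ℝ, rhoS ((1 - t) • z) * ‖deriv (fun s : ℝ => (1 - s) • z) t‖
      = Real.pi / 2 * ‖z‖ := by
    intro t
    rw [seg_deriv]
    have hre : ((1 - t) • z).re = 0 := by
      simp [Complex.real_smul, Complex.mul_re, hz]
    rw [rhoS, hre, mul_zero, Real.cos_zero, div_one]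
    simp
  simp only [h]
  simp

/-- Lower bound on the hyperbolic length of any C¹ curve in the strip. -/
lemma hypLenS_lower (γ : ℝ → ℂ) (hγ : ContDiffOn ℝ 1 γ (Icc 0 1))
    (hS : ∀ t ∈ Icc (0:ℝ) 1, γ t ∈ stripS) :
    Real.pi / 2 * ‖γ 1 - γ 0‖ ≤ hypLenS γ := by
  have hpi := Real.pi_pos
  set g := derivWithin γ (Icc (0:ℝ) 1) with hg
  have hgc : ContinuousOn g (Icc 0 1) :=
    hγ.continuousOn_derivWithin (uniqueDiffOn_Icc one_pos) le_rfl
  have hEq : ∀ t ∈ Ioo (0:ℝ) 1, deriv γ t = g t := by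
    intro t ht
    exact (derivWithin_of_mem_nhds (Icc_mem_nhds ht.1 ht.2)).symm
  have hda : ∀ t ∈ Ioo (0:ℝ) 1, HasDerivAt γ (g t) t := by
    intro t ht
    have hm : Icc (0:ℝ) 1 ∈ nhds t := Icc_mem_nhds ht.1 ht.2
    have hd := ((hγ.differentiableOn one_ne_zero) t (Ioo_subset_Icc_self ht)).differentiableAt hm
    have h2 := hd.hasDerivAt
    rwa [hEq t ht] at h2
  have huIcc : uIcc (0:ℝ) 1 = Icc 0 1 := uIcc_of_le (by norm_num)
  have hgint : IntervalIntegrable g volume 0 1 := (huIcc ▸ hgc).intervalIntegrable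
  have hFTC : ∫ t in (0:ℝ)..1, g t = γ 1 - γ 0 := by
    apply intervalIntegral.integral_eq_sub_of_hasDeriv_right_of_le (by norm_num)
      hγ.continuousOn (fun t ht => (hda t ht).hasDerivWithinAt) hgint
  have hne1 : ∀ᵐ t : ℝ ∂volume, t ≠ 1 := by
    have h0 : volume ({1} : Set ℝ) = 0 := MeasureTheory.measure_singleton 1
    simpa using MeasureTheory.measure_eq_zero_iff_ae_notMem.mp h0
  have hcos : ContinuousOn (fun t => Real.cos (Real.pi / 2 * (γ t).re)) (Icc 0 1) :=
    Real.continuous_cos.comp_continuousOn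
      ((continuous_const.mul Complex.continuous_re).comp_continuousOn hγ.continuousOn)
  have hcospos : ∀ t ∈ Icc (0:ℝ) 1, 0 < Real.cos (Real.pi / 2 * (γ t).re) := by
    intro t ht
    obtain ⟨h1, h2⟩ := hS t ht
    apply Real.cos_pos_of_mem_Ioo
    constructor <;> nlinarith
  have hrhoScont : ContinuousOn (fun t => rhoS (γ t)) (Icc 0 1) := by
    simp only [rhoS]
    exact continuousOn_const.div hcos (fun t ht => (hcospos t ht).ne')
  have hcont2 : ContinuousOn (fun t => rhoS (γ t) * ‖g t‖) (Icc 0 1) :=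
    hrhoScont.mul hgc.norm
  have hint2 : IntervalIntegrable (fun t => rhoS (γ t) * ‖g t‖) volume 0 1 :=
    (huIcc ▸ hcont2).intervalIntegrable
  have hint3 : IntervalIntegrable (fun t => Real.pi / 2 * ‖g t‖) volume 0 1 :=
    (huIcc ▸ (continuousOn_const.mul hgc.norm)).intervalIntegrable
  have hInt1 : hypLenS γ = ∫ t in (0:ℝ)..1, rhoS (γ t) * ‖g t‖ := by
    unfold hypLenS
    apply intervalIntegral.integral_congr_ae
    filter_upwards [hne1] with t ht htmem
    rw [uIoc_of_le (by norm_num : (0:ℝ) ≤ 1)] at htmem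
    rw [hEq t ⟨htmem.1, lt_of_le_of_ne htmem.2 ht⟩]
  have key : (∫ t in (0:ℝ)..1, Real.pi / 2 * ‖g t‖) ≤ ∫ t in (0:ℝ)..1, rhoS (γ t) * ‖g t‖ := by
    apply intervalIntegral.integral_mono_on (by norm_num) hint3 hint2
    intro t ht
    exact mul_le_mul_of_nonneg_right (stripS_rhoS_ge (hS t ht)) (norm_nonneg _)
  have habs : Real.pi / 2 * ‖γ 1 - γ 0‖ ≤ ∫ t in (0:ℝ)..1, Real.pi / 2 * ‖g t‖ := by
    rw [intervalIntegral.integral_const_mul]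
    apply mul_le_mul_of_nonneg_left _ (by positivity)
    calc ‖γ 1 - γ 0‖ = ‖∫ t in (0:ℝ)..1, g t‖ := by
          rw [hFTC]
      _ ≤ ∫ t in (0:ℝ)..1, ‖g t‖ :=
          intervalIntegral.norm_integral_le_integral_norm (by norm_num)
  rw [hInt1]
  exact habs.trans key

lemma dS_ge (z : ℂ) (hz : z ∈ stripS) : Real.pi / 2 * ‖z‖ ≤ dS z 0 := by
  apply le_csInf
  · refine ⟨hypLenS (fun s : ℝ => (1 - s) • z), fun s : ℝ => (1 - s) • z,
      (seg_contDiff z).contDiffOn, by simp, by simp, fun t ht => seg_mem_stripS hz ht, rfl⟩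
  · rintro L ⟨γ, hγ, h0, h1, hSm, rfl⟩
    have h := hypLenS_lower γ hγ hSm
    rw [h0, h1, zero_sub, norm_neg] at h
    exact h

lemma dS_le_seg (z : ℂ) (hz : z ∈ stripS) :
    dS z 0 ≤ hypLenS (fun s : ℝ => (1 - s) • z) := by
  apply csInf_le
  · refine ⟨0, ?_⟩
    rintro L ⟨γ, hγ, h0, h1, hSm, rfl⟩
    have h := hypLenS_lower γ hγ hSm
    have : (0:ℝ) ≤ Real.pi / 2 * ‖γ 1 - γ 0‖ := by positivity
    linarith
  · exact ⟨fun s : ℝ => (1 - s) • z, (seg_contDiff z).contDiffOn, by simp, by simp,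
      fun t ht => seg_mem_stripS hz ht, rfl⟩

end Aux

/-- `max {|z| : z ∈ S, d_S(z,0) ≤ λ} = 2λ/π`. -/
theorem max_abs_hyperbolic_disc (lam : ℝ) (hlam : 0 < lam) :
    IsGreatest {x : ℝ | ∃ z ∈ stripS, dS z 0 ≤ lam ∧ x = ‖z‖}
      (2 * lam / Real.pi) := by
  have hpi := Real.pi_pos
  set r : ℝ := 2 * lam / Real.pi with hr
  have hrpos : 0 < r := by positivity
  set z : ℂ := Complex.I * (r : ℝ) with hz
  have hzre : z.re = 0 := by simp [hz]
  have hzabs : ‖z‖ = r := by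
    rw [hz, norm_mul, Complex.norm_I, Complex.norm_real, one_mul, Real.norm_of_nonneg hrpos.le]
  have hzS : z ∈ stripS := by
    constructor <;> rw [hzre] <;> norm_num
  constructor
  · refine ⟨z, hzS, ?_, hzabs.symm⟩
    calc dS z 0 ≤ hypLenS (fun s : ℝ => (1 - s) • z) := dS_le_seg z hzS
      _ = Real.pi / 2 * ‖z‖ := hypLenS_seg hzre
      _ = lam := by rw [hzabs, hr]; field_simp
  · rintro x ⟨w, hwS, hd, rfl⟩
    have h := (dS_ge w hwS).trans hd
    rw [hr, le_div_iff₀ hpi]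
    nlinarith
end

section
/- (Schwarz lemma for harmonic functions) If u : U → (-1,1) is harmonic on the unit disc with u(0) = 0, then |u(z)| ≤ (4/π)·arctan|z| for all z ∈ U. -/
open Complex Set

lemma sin_decomp (a b : ℝ) : Complex.sin ((a:ℂ) + (b:ℂ) * Complex.I)
    = ((Real.sin a * Real.cosh b : ℝ) : ℂ) + ((Real.cos a * Real.sinh b : ℝ):ℂ) * Complex.I := by
  rw [Complex.sin_add, Complex.sin_mul_I, Complex.cos_mul_I]
  push_cast; ring

lemma cos_decomp (a b : ℝ) : Complex.cos ((a:ℂ) + (b:ℂ) * Complex.I)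
    = ((Real.cos a * Real.cosh b : ℝ) : ℂ) + ((-(Real.sin a * Real.sinh b) : ℝ):ℂ) * Complex.I := by
  rw [Complex.cos_add, Complex.sin_mul_I, Complex.cos_mul_I]
  push_cast; ring

lemma normSq_sin_eq (a b : ℝ) :
    Complex.normSq (Complex.sin ((a:ℂ) + (b:ℂ) * Complex.I)) =
      Real.sin a ^ 2 + Real.sinh b ^ 2 := by
  rw [sin_decomp, Complex.normSq_add_mul_I]
  nlinarith [Real.sin_sq_add_cos_sq a, Real.cosh_sq b]

lemma normSq_cos_eq (a b : ℝ) :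
    Complex.normSq (Complex.cos ((a:ℂ) + (b:ℂ) * Complex.I)) =
      Real.cos a ^ 2 + Real.sinh b ^ 2 := by
  rw [cos_decomp, Complex.normSq_add_mul_I]
  nlinarith [Real.sin_sq_add_cos_sq a, Real.cosh_sq b]

lemma normSq_sin_eq' (ζ : ℂ) : Complex.normSq (Complex.sin ζ) =
    Real.sin ζ.re ^ 2 + Real.sinh ζ.im ^ 2 := by
  conv_lhs => rw [← Complex.re_add_im ζ]
  exact normSq_sin_eq _ _

lemma normSq_cos_eq' (ζ : ℂ) : Complex.normSq (Complex.cos ζ) =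
    Real.cos ζ.re ^ 2 + Real.sinh ζ.im ^ 2 := by
  conv_lhs => rw [← Complex.re_add_im ζ]
  exact normSq_cos_eq _ _

lemma cos_ne_zero_strip {ζ : ℂ} (h : |ζ.re| < Real.pi/4) : Complex.cos ζ ≠ 0 := by
  intro hc
  have h2 : Complex.normSq (Complex.cos ζ) = 0 := by rw [hc]; simp
  rw [normSq_cos_eq'] at h2
  have hcos : 0 < Real.cos ζ.re := by
    apply Real.cos_pos_of_mem_Ioo
    constructor <;> nlinarith [abs_lt.1 h, Real.pi_pos]
  nlinarith [sq_nonneg (Real.sinh ζ.im)]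

lemma sin_sq_lt_cos_sq {a : ℝ} (h : |a| < Real.pi/4) : Real.sin a ^ 2 < Real.cos a ^ 2 := by
  have h2 : 0 < Real.cos (2*a) := by
    apply Real.cos_pos_of_mem_Ioo
    constructor <;> nlinarith [abs_lt.1 h, Real.pi_pos]
  nlinarith [Real.cos_sq' a, Real.cos_two_mul a, Real.sin_sq_add_cos_sq a]

lemma abs_tan_lt_one {ζ : ℂ} (h : |ζ.re| < Real.pi/4) : ‖Complex.tan ζ‖ < 1 := by
  have hc := cos_ne_zero_strip h
  have habs : 0 < ‖Complex.cos ζ‖ := norm_pos_iff.mpr hc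
  have key : Complex.normSq (Complex.sin ζ) < Complex.normSq (Complex.cos ζ) := by
    rw [normSq_sin_eq', normSq_cos_eq']
    have := sin_sq_lt_cos_sq h
    linarith
  rw [Complex.tan_eq_sin_div_cos, norm_div, div_lt_one habs]
  have h1 : ‖Complex.sin ζ‖ ^ 2 < ‖Complex.cos ζ‖ ^ 2 := by
    rwa [Complex.sq_norm, Complex.sq_norm]
  exact lt_of_pow_lt_pow_left₀ 2 (by positivity) h1

lemma real_tan_abs_le {ζ : ℂ} (h : |ζ.re| < Real.pi/4) :
    Real.tan |ζ.re| ≤ ‖Complex.tan ζ‖ := by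
  set a := ζ.re with ha
  have hπ := Real.pi_pos
  have hab := abs_lt.1 h
  have hcr : 0 < Real.cos a := by
    apply Real.cos_pos_of_mem_Ioo; constructor <;> nlinarith
  have hca : Real.cos |a| = Real.cos a := by
    rcases abs_cases a with ⟨h1,_⟩|⟨h1,_⟩ <;> rw [h1] <;> simp [Real.cos_neg]
  have hsa : Real.sin |a| = |Real.sin a| := by
    rcases abs_cases a with ⟨h1,h2⟩|⟨h1,h2⟩
    · rw [h1, _root_.abs_of_nonneg (Real.sin_nonneg_of_nonneg_of_le_pi h2 (by nlinarith))]
    · rw [h1, Real.sin_neg, _root_.abs_of_nonpos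
        (Real.sin_nonpos_of_nonpos_of_neg_pi_le h2.le (by nlinarith))]
  have hc := cos_ne_zero_strip h
  have habs : 0 < ‖Complex.cos ζ‖ := norm_pos_iff.mpr hc
  rw [Real.tan_eq_sin_div_cos, Complex.tan_eq_sin_div_cos, norm_div, hsa, hca]
  rw [div_le_div_iff₀ hcr habs]
  have hR : 0 ≤ ‖Complex.sin ζ‖ * Real.cos a := by positivity
  apply le_of_pow_le_pow_left₀ two_ne_zero hR
  rw [mul_pow, mul_pow, _root_.sq_abs, Complex.sq_norm, Complex.sq_norm,
    normSq_sin_eq', normSq_cos_eq', ← ha]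
  nlinarith [sq_nonneg (Real.sinh ζ.im), sin_sq_lt_cos_sq h]


lemma discU_eq : discU = Metric.ball (0:ℂ) 1 := by
  ext z; simp [discU, Metric.mem_ball, Complex.dist_eq]

lemma isOpen_discU : IsOpen discU := discU_eq ▸ Metric.isOpen_ball

noncomputable def gconj (u : ℂ → ℝ) (z : ℂ) : ℂ :=
  ((fderiv ℝ u z 1 : ℝ) : ℂ) - Complex.I * ((fderiv ℝ u z Complex.I : ℝ) : ℂ)

lemma gconj_differentiableAt (u : ℂ → ℝ) (hu : HarmonicOnR u discU) {z₀ : ℂ}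
    (hz₀ : z₀ ∈ discU) : DifferentiableAt ℂ (gconj u) z₀ := by
  obtain ⟨hC2, hlap⟩ := hu
  have hCA : ContDiffAt ℝ 2 u z₀ := (hC2 z₀ hz₀).contDiffAt (isOpen_discU.mem_nhds hz₀)
  have hN : ContDiffAt ℝ 1 (fderiv ℝ u) z₀ := hCA.fderiv_right (by norm_num)
  have hNd : DifferentiableAt ℝ (fderiv ℝ u) z₀ := hN.differentiableAt one_ne_zero
  set N' := fderiv ℝ (fderiv ℝ u) z₀ with hN'
  have hsymm : ∀ v w, N' v w = N' w v := (hCA.isSymmSndFDerivAt (by norm_num)).eq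
  have e1 : ∀ (c : ℂ), HasFDerivAt (fun w => fderiv ℝ u w c) (N'.flip c) z₀ := by
    intro c
    have h := hNd.hasFDerivAt.clm_apply (hasFDerivAt_const c z₀)
    simpa using h
  have hlap' : N' 1 1 + N' I I = 0 := by
    have h := hlap z₀ hz₀
    rw [(e1 1).fderiv, (e1 I).fderiv] at h
    simpa using h
  have k1 : HasFDerivAt (fun z => ((fderiv ℝ u z 1 : ℝ) : ℂ))
      (Complex.ofRealCLM.comp (N'.flip 1)) z₀ :=
    Complex.ofRealCLM.hasFDerivAt.comp z₀ (e1 1)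
  have k2 : HasFDerivAt (fun z => ((fderiv ℝ u z Complex.I : ℝ) : ℂ))
      (Complex.ofRealCLM.comp (N'.flip Complex.I)) z₀ :=
    Complex.ofRealCLM.hasFDerivAt.comp z₀ (e1 Complex.I)
  have k2' : HasFDerivAt (fun z => Complex.I * ((fderiv ℝ u z Complex.I : ℝ) : ℂ))
      (Complex.I • (Complex.ofRealCLM.comp (N'.flip Complex.I))) z₀ := by
    simpa [smul_eq_mul, Pi.smul_def] using k2.const_smul Complex.I
  set G : ℂ →L[ℝ] ℂ := Complex.ofRealCLM.comp (N'.flip 1)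
      - Complex.I • (Complex.ofRealCLM.comp (N'.flip Complex.I)) with hG
  have hg : HasFDerivAt (gconj u) G z₀ := by
    have := k1.sub k2'
    exact this
  have hGw : ∀ w, G w = ((N' w 1 : ℝ) : ℂ) - Complex.I * ((N' w Complex.I : ℝ) : ℂ) := by
    intro w
    simp [hG, smul_eq_mul]
  have hCR : G Complex.I = Complex.I * G 1 := by
    have hs := hsymm Complex.I 1
    have hl : N' Complex.I Complex.I = -(N' 1 1) := by linarith
    rw [hGw Complex.I, hGw 1, hs, hl]
    push_cast
    ring_nf
    rw [Complex.I_sq]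
    ring
  have key : ∀ w : ℂ, G w = G 1 * w := by
    intro w
    have hw : G w = w.re • G 1 + w.im • G Complex.I := by
      conv_lhs => rw [show w = w.re • (1:ℂ) + w.im • Complex.I by
        simp [Complex.real_smul]]
      rw [map_add, map_smul, map_smul]
    rw [hw, hCR]
    simp only [Complex.real_smul]
    conv_rhs => rw [← Complex.re_add_im w]
    ring
  set Gc : ℂ →L[ℂ] ℂ := G 1 • ContinuousLinearMap.id ℂ ℂ with hGc
  have hre : Gc.restrictScalars ℝ = G := by
    apply ContinuousLinearMap.ext
    intro w
    simp [hGc, key w, smul_eq_mul]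
  exact (hasFDerivAt_of_restrictScalars ℝ hg hre).differentiableAt

lemma exists_primitive (u : ℂ → ℝ) (hu : HarmonicOnR u discU) (h0 : u 0 = 0) :
    ∃ F : ℂ → ℂ, (∀ z ∈ Metric.ball (0:ℂ) 1, HasDerivAt F (gconj u z) z) ∧ F 0 = 0 ∧
      ∀ z ∈ Metric.ball (0:ℂ) 1, (F z).re = u z := by
  set g := gconj u with hgdef
  have hgd : ∀ z ∈ Metric.ball (0:ℂ) 1, DifferentiableAt ℂ g z := by
    intro z hz
    exact gconj_differentiableAt u hu (by rwa [discU_eq])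
  have hgdon : DifferentiableOn ℂ g (Metric.ball 0 1) := fun z hz => (hgd z hz).differentiableWithinAt
  have hganal : AnalyticOnNhd ℂ g (Metric.ball 0 1) := hgdon.analyticOnNhd Metric.isOpen_ball
  have hgc : ContinuousOn g (Metric.ball 0 1) := hgdon.continuousOn
  have hg'c : ContinuousOn (deriv g) (Metric.ball 0 1) := by
    have := hganal.deriv
    exact fun z hz => ((this z hz).differentiableAt.continuousAt).continuousWithinAt
  set F : ℂ → ℂ := fun z => ∫ t in (0:ℝ)..1, z * g ((t:ℝ) * z) with hFdef
  -- main derivative computation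
  have hF : ∀ z₀ ∈ Metric.ball (0:ℂ) 1, HasDerivAt F (g z₀) z₀ := by
    intro z₀ hz₀
    have hz₀' : ‖z₀‖ < 1 := by simpa [Complex.dist_eq] using hz₀
    set d : ℝ := 1 - ‖z₀‖ with hd
    have hdpos : 0 < d := by simp [hd]; linarith
    set ε : ℝ := d/4 with hε
    have hεpos : 0 < ε := by positivity
    set r : ℝ := ‖z₀‖ + d/2 with hr
    have hr1 : r < 1 := by simp [hr, hd]; linarith
    have hball : ∀ x ∈ Metric.ball z₀ ε, ‖x‖ ≤ r := by
      intro x hx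
      have : ‖x - z₀‖ < ε := by simpa [Complex.dist_eq] using hx
      calc ‖x‖ = ‖z₀ + (x - z₀)‖ := by ring_nf
        _ ≤ ‖z₀‖ + ‖x - z₀‖ := norm_add_le _ _
        _ ≤ r := by simp [hr, hε] at *; linarith
    have hmem : ∀ (t : ℝ), t ∈ Set.Icc (0:ℝ) 1 → ∀ x : ℂ, ‖x‖ ≤ r →
        ((t:ℂ) * x) ∈ Metric.ball (0:ℂ) 1 := by
      intro t ht x hx
      simp only [Metric.mem_ball, Complex.dist_eq, sub_zero, norm_mul]
      have h1 : ‖(t:ℂ)‖ = |t| := by simp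
      rw [h1, _root_.abs_of_nonneg ht.1]
      calc t * ‖x‖ ≤ 1 * r := by
            apply mul_le_mul ht.2 hx (norm_nonneg x) zero_le_one
        _ < 1 := by linarith
    -- bounds
    obtain ⟨M₁, hM₁⟩ : ∃ M, ∀ y ∈ Metric.closedBall (0:ℂ) r, ‖g y‖ ≤ M := by
      apply (isCompact_closedBall (0:ℂ) r).exists_bound_of_continuousOn
      exact hgc.mono (Metric.closedBall_subset_ball hr1)
    obtain ⟨M₂, hM₂⟩ : ∃ M, ∀ y ∈ Metric.closedBall (0:ℂ) r, ‖deriv g y‖ ≤ M := by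
      apply (isCompact_closedBall (0:ℂ) r).exists_bound_of_continuousOn
      exact hg'c.mono (Metric.closedBall_subset_ball hr1)
    have hM₁0 : 0 ≤ M₁ := le_trans (norm_nonneg _) (hM₁ 0 (by simp [hr]; positivity))
    have hM₂0 : 0 ≤ M₂ := le_trans (norm_nonneg _) (hM₂ 0 (by simp [hr]; positivity))
    set F' : ℂ → ℝ → ℂ := fun x t => 1 * g ((t:ℂ)*x) + x * (deriv g ((t:ℂ)*x) * (t:ℂ)) with hF'def
    have key := intervalIntegral.hasDerivAt_integral_of_dominated_loc_of_deriv_le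
      (μ := MeasureTheory.volume) (F := fun x t => x * g ((t:ℂ)*x)) (F' := F')
      (x₀ := z₀) (a := (0:ℝ)) (b := 1) (bound := fun _ => M₁ + M₂) (Metric.ball_mem_nhds z₀ hεpos) ?_ ?_ ?_ ?_ ?_ ?_
    · -- now compute the integral of F' z₀
      have h2 := key.2
      have heq : (∫ t in (0:ℝ)..1, F' z₀ t) = g z₀ := by
        have hftc : ∀ t ∈ Set.uIcc (0:ℝ) 1,
            HasDerivAt (fun s : ℝ => (s:ℂ) * g ((s:ℂ)*z₀))
              (1 * g ((t:ℂ)*z₀) + (t:ℂ) * (deriv g ((t:ℂ)*z₀) * z₀)) t := by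
          intro t ht
          rw [Set.uIcc_of_le (by norm_num : (0:ℝ) ≤ 1)] at ht
          have hmem' : ((t:ℂ) * z₀) ∈ Metric.ball (0:ℂ) 1 := hmem t ht z₀ (by simp [hr]; positivity)
          have hinner : HasDerivAt (fun w : ℂ => w * g (w * z₀))
              (1 * g ((t:ℂ)*z₀) + (t:ℂ) * (deriv g ((t:ℂ)*z₀) * z₀)) (t:ℂ) := by
            have hgat : HasDerivAt g (deriv g ((t:ℂ)*z₀)) ((t:ℂ)*z₀) :=
              (hgd _ hmem').hasDerivAt
            have h1 : HasDerivAt (fun w : ℂ => g (w * z₀)) (deriv g ((t:ℂ)*z₀) * z₀) (t:ℂ) :=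
              by simpa [Function.comp_def] using HasDerivAt.comp (t:ℂ) hgat ((hasDerivAt_id (t:ℂ)).mul_const z₀)
            exact (hasDerivAt_id (t:ℂ)).mul h1
          exact hinner.comp_ofReal
        have hcont : ContinuousOn
            (fun t : ℝ => 1 * g ((t:ℂ)*z₀) + (t:ℂ) * (deriv g ((t:ℂ)*z₀) * z₀))
            (Set.uIcc (0:ℝ) 1) := by
          rw [Set.uIcc_of_le (by norm_num : (0:ℝ) ≤ 1)]
          have hmap : ∀ t ∈ Set.Icc (0:ℝ) 1, ((t:ℂ)*z₀) ∈ Metric.ball (0:ℂ) 1 := by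
            intro t ht; exact hmem t ht z₀ (by simp [hr]; positivity)
          have hc1 : ContinuousOn (fun t : ℝ => ((t:ℂ)*z₀)) (Set.Icc (0:ℝ) 1) := by
            fun_prop
          apply ContinuousOn.add
          · exact (continuousOn_const.mul (hgc.comp hc1 hmap))
          · exact (Complex.continuous_ofReal.continuousOn.mul
              ((hg'c.comp hc1 hmap).mul continuousOn_const))
        have := intervalIntegral.integral_eq_sub_of_hasDerivAt hftc
          (hcont.intervalIntegrable)
        simp only [Complex.ofReal_one, Complex.ofReal_zero, one_mul, zero_mul] at this
        have heq2 : (∫ t in (0:ℝ)..1, F' z₀ t)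
            = ∫ t in (0:ℝ)..1, 1 * g ((t:ℂ)*z₀) + (t:ℂ) * (deriv g ((t:ℂ)*z₀) * z₀) := by
          apply intervalIntegral.integral_congr
          intro t ht
          simp only [hF'def]
          ring
        rw [heq2]
        simp only [one_mul]
        rw [this]
        simp
      rwa [heq] at h2
    · -- hF_meas
      filter_upwards [Metric.ball_mem_nhds z₀ hεpos] with x hx
      apply ContinuousOn.aestronglyMeasurable _ measurableSet_uIoc
      have hsub : Set.uIoc (0:ℝ) 1 ⊆ Set.Icc 0 1 := by
        rw [Set.uIoc_of_le (by norm_num : (0:ℝ) ≤ 1)]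
        exact Set.Ioc_subset_Icc_self
      have hc1 : ContinuousOn (fun t : ℝ => ((t:ℂ)*x)) (Set.uIoc (0:ℝ) 1) := by fun_prop
      exact continuousOn_const.mul (hgc.comp hc1
        (fun t ht => hmem t (hsub ht) x (hball x hx)))
    · -- hF_int
      apply ContinuousOn.intervalIntegrable
      rw [Set.uIcc_of_le (by norm_num : (0:ℝ) ≤ 1)]
      have hc1 : ContinuousOn (fun t : ℝ => ((t:ℂ)*z₀)) (Set.Icc (0:ℝ) 1) := by fun_prop
      exact continuousOn_const.mul (hgc.comp hc1
        (fun t ht => hmem t ht z₀ (by simp [hr]; positivity)))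
    · -- hF'_meas
      apply ContinuousOn.aestronglyMeasurable _ measurableSet_uIoc
      have hsub : Set.uIoc (0:ℝ) 1 ⊆ Set.Icc 0 1 := by
        rw [Set.uIoc_of_le (by norm_num : (0:ℝ) ≤ 1)]
        exact Set.Ioc_subset_Icc_self
      have hc1 : ContinuousOn (fun t : ℝ => ((t:ℂ)*z₀)) (Set.uIoc (0:ℝ) 1) := by fun_prop
      have hmapz : ∀ t ∈ Set.uIoc (0:ℝ) 1, ((t:ℂ)*z₀) ∈ Metric.ball (0:ℂ) 1 :=
        fun t ht => hmem t (hsub ht) z₀ (by simp [hr]; positivity)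
      apply ContinuousOn.add
      · exact continuousOn_const.mul (hgc.comp hc1 hmapz)
      · exact continuousOn_const.mul ((hg'c.comp hc1 hmapz).mul
          Complex.continuous_ofReal.continuousOn)
    · -- h_bound
      apply Filter.Eventually.of_forall
      intro t ht x hx
      have ht' : t ∈ Set.Icc (0:ℝ) 1 := by
        rw [Set.uIoc_of_le (by norm_num : (0:ℝ) ≤ 1)] at ht
        exact Set.Ioc_subset_Icc_self ht
      have hxr : ‖x‖ ≤ r := hball x hx
      have htx : ((t:ℂ)*x) ∈ Metric.closedBall (0:ℂ) r := by
        simp only [Metric.mem_closedBall, Complex.dist_eq, sub_zero, norm_mul,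
          Complex.norm_real, Real.norm_eq_abs, _root_.abs_of_nonneg ht'.1]
        calc t * ‖x‖ ≤ 1 * r := by
              apply mul_le_mul ht'.2 hxr (norm_nonneg x) zero_le_one
          _ = r := one_mul r
      simp only [hF'def, one_mul]
      calc ‖g ((t:ℂ)*x) + x * (deriv g ((t:ℂ)*x) * (t:ℂ))‖
          ≤ ‖g ((t:ℂ)*x)‖ + ‖x * (deriv g ((t:ℂ)*x) * (t:ℂ))‖ := norm_add_le _ _
        _ ≤ M₁ + M₂ := by
            apply add_le_add (hM₁ _ htx)
            rw [norm_mul, norm_mul]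
            calc ‖x‖ * (‖deriv g ((t:ℂ)*x)‖ * ‖(t:ℂ)‖)
                ≤ 1 * (M₂ * 1) := by
                  apply mul_le_mul
                  · have := hxr; linarith
                  · apply mul_le_mul (hM₂ _ htx) _ (norm_nonneg _) hM₂0
                    simp only [Complex.norm_real, Real.norm_eq_abs]
                    rw [_root_.abs_of_nonneg ht'.1]; exact ht'.2
                  · positivity
                  · norm_num
              _ = M₂ := by ring
    · exact intervalIntegrable_const
    · -- h_diff
      apply Filter.Eventually.of_forall
      intro t ht x hx
      have ht' : t ∈ Set.Icc (0:ℝ) 1 := by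
        rw [Set.uIoc_of_le (by norm_num : (0:ℝ) ≤ 1)] at ht
        exact Set.Ioc_subset_Icc_self ht
      have hmem' : ((t:ℂ) * x) ∈ Metric.ball (0:ℂ) 1 := hmem t ht' x (hball x hx)
      have hgat : HasDerivAt g (deriv g ((t:ℂ)*x)) ((t:ℂ)*x) := (hgd _ hmem').hasDerivAt
      have h1 : HasDerivAt (fun y : ℂ => g ((t:ℂ)*y)) (deriv g ((t:ℂ)*x) * (t:ℂ)) x := by
        have := HasDerivAt.comp x hgat ((hasDerivAt_id x).const_mul (t:ℂ))
        simpa [Function.comp_def] using this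
      exact (hasDerivAt_id x).mul h1
  refine ⟨F, hF, ?_, ?_⟩
  · simp [hFdef]
  · -- Re F = u
    have hu2 : ContDiffOn ℝ 2 u discU := hu.1
    intro z hz
    set q : ℂ → ℝ := fun z => (F z).re - u z with hq
    have hqd : ∀ w ∈ Metric.ball (0:ℂ) 1, HasFDerivAt q (0 : ℂ →L[ℝ] ℝ) w := by
      intro w hw
      have hw' : w ∈ discU := by rwa [discU_eq]
      have hud : DifferentiableAt ℝ u w :=
        ((hu2 w hw').contDiffAt (isOpen_discU.mem_nhds hw')).differentiableAt (by norm_num)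
      have hFd : HasFDerivAt F ((ContinuousLinearMap.smulRight (1 : ℂ →L[ℂ] ℂ) (g w))) w :=
        (hF w hw).hasFDerivAt
      have hre : HasFDerivAt (fun z => (F z).re)
          (Complex.reCLM.comp ((ContinuousLinearMap.smulRight (1 : ℂ →L[ℂ] ℂ)
            (g w)).restrictScalars ℝ)) w :=
        Complex.reCLM.hasFDerivAt.comp w (hFd.restrictScalars ℝ)
      have hsub := hre.sub hud.hasFDerivAt
      refine HasFDerivAt.congr_fderiv hsub ?_
      symm
      apply ContinuousLinearMap.ext
      intro v
      have hlin : fderiv ℝ u w v = v.re * (fderiv ℝ u w 1) + v.im * (fderiv ℝ u w Complex.I) := by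
        conv_lhs => rw [show v = v.re • (1:ℂ) + v.im • Complex.I by simp [Complex.real_smul]]
        rw [map_add, map_smul, map_smul]
        simp [smul_eq_mul]
      simp only [ContinuousLinearMap.sub_apply, ContinuousLinearMap.coe_comp', Function.comp_apply,
        ContinuousLinearMap.coe_restrictScalars', ContinuousLinearMap.smulRight_apply,
        ContinuousLinearMap.one_apply, Complex.reCLM_apply, ContinuousLinearMap.zero_apply,
        smul_eq_mul, hlin, hgdef, gconj]
      simp only [Complex.mul_re, Complex.sub_re, Complex.sub_im, Complex.ofReal_re,
        Complex.ofReal_im, Complex.mul_im, Complex.I_re, Complex.I_im]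
      ring
    have hcst := (convex_ball (0:ℂ) 1).is_const_of_fderivWithin_eq_zero
      (f := q) (𝕜 := ℝ) (fun w hw => (hqd w hw).differentiableAt.differentiableWithinAt)
      (fun w hw => by rw [fderivWithin_of_isOpen Metric.isOpen_ball hw]; exact (hqd w hw).fderiv)
      hz (Metric.mem_ball_self one_pos)
    have hF0 : F 0 = 0 := by simp [hFdef]
    have : q z = q 0 := hcst
    simp only [hq, hF0, h0, Complex.zero_re, sub_zero] at this
    linarith [this]

/-- Schwarz lemma for harmonic functions `u : U → (-1,1)` with `u 0 = 0`. -/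
theorem schwarz_harmonic (u : ℂ → ℝ) (hu : HarmonicOnR u discU)
    (hmap : ∀ z ∈ discU, u z ∈ Set.Ioo (-1 : ℝ) 1) (h0 : u 0 = 0) :
    ∀ z ∈ discU, |u z| ≤ (4 / Real.pi) * Real.arctan (‖z‖) := by
  obtain ⟨F, hF, hF0, hFre⟩ := exists_primitive u hu h0
  have hπ := Real.pi_pos
  set c : ℂ := ((Real.pi/4 : ℝ) : ℂ) with hc
  set ψ : ℂ → ℂ := fun z => Complex.tan (c * F z) with hψ
  have hre : ∀ w ∈ Metric.ball (0:ℂ) 1, (c * F w).re = Real.pi/4 * u w := by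
    intro w hw
    rw [← hFre w hw, hc]
    simp [Complex.mul_re]
  have hrebound : ∀ w ∈ Metric.ball (0:ℂ) 1, |(c * F w).re| < Real.pi/4 := by
    intro w hw
    have hw' : w ∈ discU := by rw [discU_eq]; exact hw
    have h1 : |u w| < 1 := abs_lt.2 ⟨(hmap w hw').1, (hmap w hw').2⟩
    rw [hre w hw, abs_mul, _root_.abs_of_pos (by positivity : (0:ℝ) < Real.pi/4)]
    nlinarith [abs_nonneg (u w)]
  have hψdiff : DifferentiableOn ℂ ψ (Metric.ball 0 1) := by
    intro w hw
    apply DifferentiableAt.differentiableWithinAt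
    exact (Complex.differentiableAt_tan.2 (cos_ne_zero_strip (hrebound w hw))).comp w
      (((hF w hw).differentiableAt).const_mul c)
  have hψmaps : Set.MapsTo ψ (Metric.ball 0 1) (Metric.ball 0 1) := by
    intro w hw
    rw [Metric.mem_ball, Complex.dist_eq, sub_zero]
    exact abs_tan_lt_one (hrebound w hw)
  have hψ0 : ψ 0 = 0 := by simp [hψ, hF0]
  intro z hz
  have hz1 : ‖z‖ < 1 := hz
  have hzball : z ∈ Metric.ball (0:ℂ) 1 := by
    rw [Metric.mem_ball, Complex.dist_eq, sub_zero]; exact hz1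
  have hschwarz : ‖ψ z‖ ≤ ‖z‖ :=
    Complex.norm_le_norm_of_mapsTo_ball_self hψdiff (hψmaps.mono_right Metric.ball_subset_closedBall) hψ0 hz1
  have htan : Real.tan |(c * F z).re| ≤ ‖ψ z‖ := real_tan_abs_le (hrebound z hzball)
  have h2 : Real.tan (Real.pi/4 * |u z|) ≤ ‖z‖ := by
    have : |(c * F z).re| = Real.pi/4 * |u z| := by
      rw [hre z hzball, abs_mul, _root_.abs_of_pos (by positivity : (0:ℝ) < Real.pi/4)]
    rw [this] at htan
    exact le_trans htan hschwarz
  have huz : |u z| < 1 := abs_lt.2 ⟨(hmap z hz).1, (hmap z hz).2⟩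
  have hbnd1 : -(Real.pi/2) < Real.pi/4 * |u z| := by nlinarith [abs_nonneg (u z)]
  have hbnd2 : Real.pi/4 * |u z| < Real.pi/2 := by nlinarith [abs_nonneg (u z)]
  have hmono := Real.arctan_strictMono.monotone h2
  rw [Real.arctan_tan hbnd1 hbnd2] at hmono
  have h4 : (0:ℝ) < 4/Real.pi := by positivity
  calc |u z| = (4/Real.pi) * (Real.pi/4 * |u z|) := by field_simp
    _ ≤ (4/Real.pi) * Real.arctan (‖z‖) := mul_le_mul_of_nonneg_left hmono h4.le
end

section
/- For b ∈ (-1,1) and r ∈ (0,1), the image under Re of the closed hyperbolic disc in the strip S with hyperbolic center b and hyperbolic radius λ(r) = ln((1+r)/(1-r)) is exactly the interval [(4/π)arctan((a-r)/(1-ar)), (4/π)arctan((a+r)/(1+ar))], where a = tan(bπ/4). -/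
open Complex Set

noncomputable def Lam (x : ℝ) : ℝ := 2 * artanh (Real.tan (x * Real.pi / 4))

lemma artanh_hasDerivAt {y : ℝ} (h1 : -1 < y) (h2 : y < 1) :
    HasDerivAt artanh (1 / (1 - y ^ 2)) y := by
  have hy1 : (0:ℝ) < 1 + y := by linarith
  have hy2 : (0:ℝ) < 1 - y := by linarith
  have hf : HasDerivAt (fun x : ℝ => (1 + x) / (1 - x))
      ((1 * (1 - y) - (1 + y) * (-1)) / (1 - y) ^ 2) y := by
    exact HasDerivAt.div ((hasDerivAt_id y).const_add 1) ((hasDerivAt_id y).const_sub 1)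
      (by linarith)
  have hpos : (0:ℝ) < (1 + y) / (1 - y) := div_pos hy1 hy2
  have hl := (hf.log (ne_of_gt hpos)).div_const 2
  have hne : (1:ℝ) - y ^ 2 ≠ 0 := by nlinarith
  refine hl.congr_deriv ?_
  field_simp
  ring

lemma artanh_le_artanh_iff {x y : ℝ} (hx1 : -1 < x) (hx2 : x < 1) (hy1 : -1 < y) (hy2 : y < 1) :
    artanh x ≤ artanh y ↔ x ≤ y := by
  unfold artanh
  have hx1' : (0:ℝ) < 1 + x := by linarith
  have hx2' : (0:ℝ) < 1 - x := by linarith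
  have hy1' : (0:ℝ) < 1 + y := by linarith
  have hy2' : (0:ℝ) < 1 - y := by linarith
  rw [div_le_div_iff_of_pos_right two_pos,
    Real.log_le_log_iff (div_pos hx1' hx2') (div_pos hy1' hy2'),
    div_le_div_iff₀ hx2' hy2']
  constructor <;> intro h <;> nlinarith

lemma artanh_add {u v : ℝ} (hu1 : -1 < u) (hu2 : u < 1) (hv1 : -1 < v) (hv2 : v < 1) :
    artanh u + artanh v = artanh ((u + v) / (1 + u * v)) := by
  unfold artanh
  have h1 : (0:ℝ) < 1 + u := by linarith
  have h2 : (0:ℝ) < 1 - u := by linarith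
  have h3 : (0:ℝ) < 1 + v := by linarith
  have h4 : (0:ℝ) < 1 - v := by linarith
  have h5 : (0:ℝ) < 1 + u * v := by nlinarith
  have key : (1 + (u + v) / (1 + u * v)) / (1 - (u + v) / (1 + u * v))
      = ((1 + u) / (1 - u)) * ((1 + v) / (1 - v)) := by
    have hnum : 1 + (u + v) / (1 + u * v) = ((1 + u) * (1 + v)) / (1 + u * v) := by
      field_simp; ring
    have hden : 1 - (u + v) / (1 + u * v) = ((1 - u) * (1 - v)) / (1 + u * v) := by
      field_simp; ring
    rw [hnum, hden]
    rw [div_div_div_comm]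
    rw [div_self h5.ne']
    field_simp
  rw [key, Real.log_mul (by positivity) (by positivity)]
  ring

lemma artanh_neg (v : ℝ) : artanh (-v) = - artanh v := by
  unfold artanh
  have : (1 + -v) / (1 - -v) = ((1 + v) / (1 - v))⁻¹ := by
    rw [inv_div]; ring_nf
  rw [this, Real.log_inv]
  ring

lemma angle_mem {x : ℝ} (h1 : -1 < x) (h2 : x < 1) :
    x * Real.pi / 4 ∈ Set.Ioo (-(Real.pi / 2)) (Real.pi / 2) := by
  have hpi := Real.pi_pos
  constructor <;> nlinarith

lemma half_angle_mem {x : ℝ} (h1 : -1 < x) (h2 : x < 1) :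
    Real.pi / 2 * x ∈ Set.Ioo (-(Real.pi / 2)) (Real.pi / 2) := by
  have hpi := Real.pi_pos
  constructor <;> nlinarith

lemma cos_half_pos {x : ℝ} (h1 : -1 < x) (h2 : x < 1) : 0 < Real.cos (Real.pi / 2 * x) :=
  Real.cos_pos_of_mem_Ioo (half_angle_mem h1 h2)

lemma tan_bd {x : ℝ} (h1 : -1 < x) (h2 : x < 1) :
    -1 < Real.tan (x * Real.pi / 4) ∧ Real.tan (x * Real.pi / 4) < 1 := by
  have hpi := Real.pi_pos
  have hmem := angle_mem h1 h2
  have h4 : Real.pi / 4 ∈ Set.Ioo (-(Real.pi / 2)) (Real.pi / 2) := by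
    constructor <;> nlinarith
  have hm4 : -(Real.pi / 4) ∈ Set.Ioo (-(Real.pi / 2)) (Real.pi / 2) := by
    constructor <;> nlinarith
  constructor
  · have := Real.strictMonoOn_tan hm4 hmem (by simp only [Set.mem_Ioo] at hmem ⊢; nlinarith)
    rw [Real.tan_neg, Real.tan_pi_div_four] at this
    linarith
  · have := Real.strictMonoOn_tan hmem h4 (by simp only [Set.mem_Ioo] at hmem ⊢; nlinarith)
    rwa [Real.tan_pi_div_four] at this

lemma cos_angle_pos {x : ℝ} (h1 : -1 < x) (h2 : x < 1) : 0 < Real.cos (x * Real.pi / 4) :=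
  Real.cos_pos_of_mem_Ioo (angle_mem h1 h2)

lemma Lam_hasDerivAt {x : ℝ} (h1 : -1 < x) (h2 : x < 1) :
    HasDerivAt Lam ((Real.pi / 2) / Real.cos (Real.pi / 2 * x)) x := by
  have hpi := Real.pi_pos
  have hc : Real.cos (x * Real.pi / 4) ≠ 0 := (cos_angle_pos h1 h2).ne'
  have hc2 : 0 < Real.cos (Real.pi / 2 * x) := cos_half_pos h1 h2
  have htan : HasDerivAt (fun y : ℝ => Real.tan (y * Real.pi / 4))
      ((1 / Real.cos (x * Real.pi / 4) ^ 2) * (Real.pi / 4)) x := by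
    have hlin : HasDerivAt (fun y : ℝ => y * Real.pi / 4) (Real.pi / 4) x := by
      simpa using ((hasDerivAt_id x).mul_const Real.pi).div_const 4
    exact (Real.hasDerivAt_tan hc).comp x hlin
  have hbd := tan_bd h1 h2
  have hart := (artanh_hasDerivAt hbd.1 hbd.2).comp x htan
  have hL := hart.const_mul (2 : ℝ)
  have : Lam = fun y : ℝ => 2 * (artanh ∘ fun y : ℝ => Real.tan (y * Real.pi / 4)) y := rfl
  rw [this]
  refine hL.congr_deriv ?_
  have hdbl : Real.pi / 2 * x = 2 * (x * Real.pi / 4) := by ring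
  rw [hdbl, Real.cos_two_mul]
  have h2c : (0:ℝ) < 2 * Real.cos (x * Real.pi / 4) ^ 2 - 1 := by
    have := Real.cos_two_mul (x * Real.pi / 4)
    rw [← this, ← hdbl]; exact hc2
  rw [Real.tan_eq_sin_div_cos]
  have hs : Real.sin (x * Real.pi / 4) ^ 2 = 1 - Real.cos (x * Real.pi / 4) ^ 2 := by
    nlinarith [Real.sin_sq_add_cos_sq (x * Real.pi / 4)]
  have key : 1 - (Real.sin (x * Real.pi / 4) / Real.cos (x * Real.pi / 4)) ^ 2
      = (2 * Real.cos (x * Real.pi / 4) ^ 2 - 1) / Real.cos (x * Real.pi / 4) ^ 2 := by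
    rw [div_pow, hs]; field_simp; ring
  rw [key]
  rw [one_div_div]
  field_simp
  ring

lemma Lam_le_iff {x y : ℝ} (hx1 : -1 < x) (hx2 : x < 1) (hy1 : -1 < y) (hy2 : y < 1) :
    Lam x ≤ Lam y ↔ x ≤ y := by
  unfold Lam
  have bx := tan_bd hx1 hx2
  have by' := tan_bd hy1 hy2
  have hpi := Real.pi_pos
  rw [mul_le_mul_iff_right₀ two_pos,
    artanh_le_artanh_iff bx.1 bx.2 by'.1 by'.2,
    Real.strictMonoOn_tan.le_iff_le (angle_mem hx1 hx2) (angle_mem hy1 hy2)]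
  constructor <;> intro h <;> nlinarith


lemma len_lower_bound {bb : ℝ} {z : ℂ} (hz : z ∈ stripS)
    {γ : ℝ → ℂ} (hγ : ContDiffOn ℝ 1 γ (Set.Icc 0 1)) (h0 : γ 0 = z) (h1 : γ 1 = (bb:ℂ))
    (hmem : ∀ t ∈ Set.Icc (0:ℝ) 1, γ t ∈ stripS) :
    |Lam bb - Lam z.re| ≤ hypLenS γ := by
  have hpi := Real.pi_pos
  set D : ℝ → ℂ := derivWithin γ (Set.Icc 0 1) with hDdef
  have hD : ContinuousOn D (Set.Icc 0 1) :=
    hγ.continuousOn_derivWithin (uniqueDiffOn_Icc one_pos) le_rfl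
  have hγc : ContinuousOn γ (Set.Icc 0 1) := hγ.continuousOn
  have hrec : ContinuousOn (fun t => (γ t).re) (Set.Icc 0 1) :=
    Complex.continuous_re.comp_continuousOn hγc
  have hstrip : ∀ t ∈ Set.Icc (0:ℝ) 1, -1 < (γ t).re ∧ (γ t).re < 1 := fun t ht => hmem t ht
  have hcos : ∀ t ∈ Set.Icc (0:ℝ) 1, 0 < Real.cos (Real.pi / 2 * (γ t).re) :=
    fun t ht => cos_half_pos (hstrip t ht).1 (hstrip t ht).2
  have hρ : ContinuousOn (fun t => (Real.pi / 2) / Real.cos (Real.pi / 2 * (γ t).re))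
      (Set.Icc 0 1) := by
    apply continuousOn_const.div
    · exact Real.continuous_cos.comp_continuousOn (continuousOn_const.mul hrec)
    · exact fun t ht => (hcos t ht).ne'
  set f' : ℝ → ℝ := fun t => (Real.pi / 2) / Real.cos (Real.pi / 2 * (γ t).re) * (D t).re
    with hf'def
  set g : ℝ → ℝ := fun t => (Real.pi / 2) / Real.cos (Real.pi / 2 * (γ t).re) * ‖D t‖
    with hgdef
  have hf'c : ContinuousOn f' (Set.Icc 0 1) :=
    hρ.mul (Complex.continuous_re.comp_continuousOn hD)
  have hgc : ContinuousOn g (Set.Icc 0 1) := hρ.mul hD.norm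
  have huIcc : Set.uIcc (0:ℝ) 1 = Set.Icc 0 1 := Set.uIcc_of_le zero_le_one
  have hf'i : IntervalIntegrable f' MeasureTheory.volume 0 1 :=
    (huIcc ▸ hf'c).intervalIntegrable
  have hgi : IntervalIntegrable g MeasureTheory.volume 0 1 :=
    (huIcc ▸ hgc).intervalIntegrable
  have hdiff : ∀ t ∈ Set.Ioo (0:ℝ) 1, HasDerivAt γ (D t) t := by
    intro t ht
    have h' : HasDerivWithinAt γ (D t) (Set.Icc 0 1) t :=
      ((hγ.differentiableOn one_ne_zero) t (Set.Ioo_subset_Icc_self ht)).hasDerivWithinAt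
    exact h'.hasDerivAt (Icc_mem_nhds ht.1 ht.2)
  have hLamCont : ContinuousOn Lam (Set.Ioo (-1:ℝ) 1) :=
    fun y hy => (Lam_hasDerivAt hy.1 hy.2).continuousAt.continuousWithinAt
  have hFcont : ContinuousOn (fun t => Lam ((γ t).re)) (Set.Icc 0 1) :=
    hLamCont.comp hrec (fun t ht => hstrip t ht)
  have hFd : ∀ t ∈ Set.Ioo (0:ℝ) 1,
      HasDerivWithinAt (fun t => Lam ((γ t).re)) (f' t) (Set.Ioi t) t := by
    intro t ht
    have htI := Set.Ioo_subset_Icc_self ht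
    have hre : HasDerivAt (fun s => (γ s).re) ((D t).re) t := by
      have := Complex.reCLM.hasFDerivAt.comp_hasDerivAt t (hdiff t ht)
      exact this
    exact (((Lam_hasDerivAt (hstrip t htI).1 (hstrip t htI).2).comp t hre).hasDerivWithinAt)
  have hFTC : ∫ t in (0:ℝ)..1, f' t = Lam bb - Lam z.re := by
    have := intervalIntegral.integral_eq_sub_of_hasDeriv_right_of_le zero_le_one hFcont hFd hf'i
    rw [this, h1, h0]
    simp
  have hpt : ∀ t ∈ Set.Icc (0:ℝ) 1, ‖f' t‖ ≤ g t := by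
    intro t ht
    have hρpos : 0 ≤ (Real.pi / 2) / Real.cos (Real.pi / 2 * (γ t).re) :=
      le_of_lt (div_pos (by positivity) (hcos t ht))
    have hre : |(D t).re| ≤ ‖D t‖ := by
      exact Complex.abs_re_le_norm (D t)
    calc ‖f' t‖ = (Real.pi / 2) / Real.cos (Real.pi / 2 * (γ t).re) * |(D t).re| := by
          rw [hf'def]; rw [Real.norm_eq_abs, abs_mul, _root_.abs_of_nonneg hρpos]
      _ ≤ g t := mul_le_mul_of_nonneg_left hre hρpos
  have hae : ∀ᵐ t ∂(MeasureTheory.volume.restrict (Set.uIoc (0:ℝ) 1)), ‖f' t‖ ≤ g t := by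
    refine MeasureTheory.ae_restrict_of_forall_mem measurableSet_uIoc (fun t ht => hpt t ?_)
    rw [Set.uIoc_of_le zero_le_one] at ht
    exact ⟨le_of_lt ht.1, ht.2⟩
  have hle : |∫ t in (0:ℝ)..1, f' t| ≤ |∫ t in (0:ℝ)..1, g t| := by
    have := intervalIntegral.norm_integral_le_abs_of_norm_le hae hgi
    simpa using this
  have hgnn : 0 ≤ ∫ t in (0:ℝ)..1, g t :=
    intervalIntegral.integral_nonneg zero_le_one
      (fun u hu => mul_nonneg (le_of_lt (div_pos (by positivity) (hcos u hu))) (norm_nonneg _))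
  have hone : ∀ᵐ t : ℝ ∂MeasureTheory.volume, t ≠ 1 := by
    rw [MeasureTheory.ae_iff]
    simp only [not_not]
    have : {t : ℝ | t = 1} = {(1:ℝ)} := by ext t; simp
    rw [this]
    exact MeasureTheory.measure_singleton 1
  have hgeq : ∫ t in (0:ℝ)..1, g t = hypLenS γ := by
    unfold hypLenS
    apply intervalIntegral.integral_congr_ae
    filter_upwards [hone] with t ht htΙ
    rw [Set.uIoc_of_le zero_le_one] at htΙ
    have htIoo : t ∈ Set.Ioo (0:ℝ) 1 := ⟨htΙ.1, lt_of_le_of_ne htΙ.2 ht⟩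
    have hder : deriv γ t = D t := (hdiff t htIoo).deriv
    rw [hgdef]
    show (Real.pi / 2) / Real.cos (Real.pi / 2 * (γ t).re) * ‖D t‖ = rhoS (γ t) * ‖deriv γ t‖
    rw [hder]; rfl
  calc |Lam bb - Lam z.re| = |∫ t in (0:ℝ)..1, f' t| := by rw [hFTC]
    _ ≤ |∫ t in (0:ℝ)..1, g t| := hle
    _ = ∫ t in (0:ℝ)..1, g t := _root_.abs_of_nonneg hgnn
    _ = hypLenS γ := hgeq

lemma seg_spec (x bb : ℝ) (hx1 : -1 < x) (hx2 : x < 1) (hb1 : -1 < bb) (hb2 : bb < 1) :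
    ∃ γ : ℝ → ℂ, ContDiffOn ℝ 1 γ (Set.Icc 0 1) ∧ γ 0 = (x:ℂ) ∧ γ 1 = (bb:ℂ) ∧
      (∀ t ∈ Set.Icc (0:ℝ) 1, γ t ∈ stripS) ∧ hypLenS γ = |Lam bb - Lam x| := by
  have hpi := Real.pi_pos
  set γ : ℝ → ℂ := fun t : ℝ => ((x + t * (bb - x) : ℝ) : ℂ) with hγdef
  have hsm : ContDiff ℝ 1 γ := by
    apply Complex.ofRealCLM.contDiff.comp
    exact contDiff_const.add (contDiff_id.mul contDiff_const)
  have hpt : ∀ t ∈ Set.Icc (0:ℝ) 1, -1 < x + t * (bb - x) ∧ x + t * (bb - x) < 1 := by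
    intro t ht
    rcases ht with ⟨ht0, ht1⟩
    constructor
    · rcases eq_or_lt_of_le ht0 with h | h
      · rw [← h]; simpa using hx1
      · nlinarith [mul_pos h (show (0:ℝ) < bb + 1 by linarith),
          mul_nonneg (by linarith : (0:ℝ) ≤ 1 - t) (by linarith : (0:ℝ) ≤ x + 1)]
    · rcases eq_or_lt_of_le ht0 with h | h
      · rw [← h]; simpa using hx2
      · nlinarith [mul_pos h (show (0:ℝ) < 1 - bb by linarith),
          mul_nonneg (by linarith : (0:ℝ) ≤ 1 - t) (by linarith : (0:ℝ) ≤ 1 - x)]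
  have hd : ∀ t : ℝ, HasDerivAt γ ((bb - x : ℝ) : ℂ) t := by
    intro t
    have h : HasDerivAt (fun t : ℝ => x + t * (bb - x)) (bb - x) t := by
      simpa using ((hasDerivAt_id t).mul_const (bb - x)).const_add x
    exact h.ofReal_comp
  have hre : ∀ t : ℝ, (γ t).re = x + t * (bb - x) := fun t => Complex.ofReal_re _
  refine ⟨γ, hsm.contDiffOn, by simp [hγdef], by simp [hγdef], ?_, ?_⟩
  · intro t ht
    exact ⟨by rw [hre]; exact (hpt t ht).1, by rw [hre]; exact (hpt t ht).2⟩
  · -- length computation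
    have hint : ∀ s : ℝ, hypLenS γ = ∫ t in (0:ℝ)..1,
        (Real.pi / 2) / Real.cos (Real.pi / 2 * (x + t * (bb - x))) * |bb - x| := by
      intro s
      unfold hypLenS
      apply intervalIntegral.integral_congr
      intro t _
      show rhoS (γ t) * ‖deriv γ t‖ = _
      rw [(hd t).deriv]
      show rhoS (γ t) * ‖((bb - x : ℝ) : ℂ)‖ = _
      rw [Complex.norm_real, Real.norm_eq_abs]
      unfold rhoS
      rw [hre]
    have hu : ∀ t ∈ Set.uIcc (0:ℝ) 1, HasDerivAt (fun t => Lam (x + t * (bb - x)))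
        ((Real.pi / 2) / Real.cos (Real.pi / 2 * (x + t * (bb - x))) * (bb - x)) t := by
      intro t ht
      rw [Set.uIcc_of_le zero_le_one] at ht
      have h : HasDerivAt (fun t : ℝ => x + t * (bb - x)) (bb - x) t := by
        simpa using ((hasDerivAt_id t).mul_const (bb - x)).const_add x
      have := (Lam_hasDerivAt (hpt t ht).1 (hpt t ht).2).comp t h
      exact this
    have hcont : ContinuousOn (fun t => (Real.pi / 2) / Real.cos (Real.pi / 2 * (x + t * (bb - x))) * (bb - x))
        (Set.uIcc (0:ℝ) 1) := by
      rw [Set.uIcc_of_le zero_le_one]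
      apply ContinuousOn.mul _ continuousOn_const
      apply continuousOn_const.div
      · fun_prop
      · intro t ht
        exact (cos_half_pos (hpt t ht).1 (hpt t ht).2).ne'
    have hFTC := intervalIntegral.integral_eq_sub_of_hasDerivAt hu hcont.intervalIntegrable
    have he1 : x + 1 * (bb - x) = bb := by ring
    have he0 : x + 0 * (bb - x) = x := by ring
    rw [he1, he0] at hFTC
    rcases le_total x bb with hxb | hxb
    · have habs : |bb - x| = bb - x := _root_.abs_of_nonneg (by linarith)
      rw [hint 0, habs]
      rw [hFTC]
      exact (_root_.abs_of_nonneg (sub_nonneg.2 ((Lam_le_iff hx1 hx2 hb1 hb2).2 hxb))).symm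
    · have habs : |bb - x| = -(bb - x) := abs_of_nonpos (by linarith)
      rw [hint 0, habs]
      have hkey : ∫ t in (0:ℝ)..1,
          (Real.pi / 2) / Real.cos (Real.pi / 2 * (x + t * (bb - x))) * -(bb - x)
          = -(Lam bb - Lam x) := by
        simp only [mul_neg]
        rw [intervalIntegral.integral_neg, hFTC]
      rw [hkey]
      exact (abs_of_nonpos (sub_nonpos.2 ((Lam_le_iff hb1 hb2 hx1 hx2).2 hxb))).symm

lemma exists_witness (z : ℂ) (hz : z ∈ stripS) (bb : ℝ) (hb1 : -1 < bb) (hb2 : bb < 1) :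
    ∃ γ : ℝ → ℂ, ContDiffOn ℝ 1 γ (Set.Icc 0 1) ∧ γ 0 = z ∧ γ 1 = (bb:ℂ) ∧
      (∀ t ∈ Set.Icc (0:ℝ) 1, γ t ∈ stripS) := by
  obtain ⟨hz1, hz2⟩ := hz
  refine ⟨fun t : ℝ => z + t • ((bb:ℂ) - z), ?_, by simp, by simp, ?_⟩
  · exact (contDiff_const.add (contDiff_id.smul contDiff_const)).contDiffOn
  · intro t ht
    rcases ht with ⟨ht0, ht1⟩
    have hre : (z + t • ((bb:ℂ) - z)).re = z.re + t * (bb - z.re) := by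
      simp [Complex.add_re, Complex.smul_re]
    constructor
    · rw [hre]
      rcases eq_or_lt_of_le ht0 with h | h
      · rw [← h]; simpa using hz1
      · nlinarith [mul_pos h (show (0:ℝ) < bb + 1 by linarith),
          mul_nonneg (by linarith : (0:ℝ) ≤ 1 - t) (by linarith : (0:ℝ) ≤ z.re + 1)]
    · rw [hre]
      rcases eq_or_lt_of_le ht0 with h | h
      · rw [← h]; simpa using hz2
      · nlinarith [mul_pos h (show (0:ℝ) < 1 - bb by linarith),
          mul_nonneg (by linarith : (0:ℝ) ≤ 1 - t) (by linarith : (0:ℝ) ≤ 1 - z.re)]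


set_option maxHeartbeats 1000000 in
/-- the image under `Re` of the closed hyperbolic disc in the strip with
hyperbolic center `b ∈ (-1,1)` and radius `λ(r)` is
`[(4/π)arctan((a-r)/(1-ar)), (4/π)arctan((a+r)/(1+ar))]`, `a = tan(bπ/4)`. -/
theorem re_image_hyperbolic_disc_general (b r : ℝ) (hb : b ∈ Set.Ioo (-1:ℝ) 1)
    (hr : r ∈ Set.Ioo (0:ℝ) 1) :
    Complex.re '' {z : ℂ | z ∈ stripS ∧ dS z (b : ℂ) ≤ Real.log ((1 + r) / (1 - r))}
      = Set.Icc
          ((4 / Real.pi) * Real.arctan ((Real.tan (b * Real.pi / 4) - r) /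
            (1 - Real.tan (b * Real.pi / 4) * r)))
          ((4 / Real.pi) * Real.arctan ((Real.tan (b * Real.pi / 4) + r) /
            (1 + Real.tan (b * Real.pi / 4) * r))) := by
  obtain ⟨hb1, hb2⟩ := hb
  obtain ⟨hr1, hr2⟩ := hr
  have hpi := Real.pi_pos
  set a := Real.tan (b * Real.pi / 4) with ha
  have hab := tan_bd hb1 hb2
  have harpos : (0:ℝ) < 1 + a * r := by nlinarith [hab.1, hab.2]
  have harpos' : (0:ℝ) < 1 - a * r := by nlinarith [hab.1, hab.2]
  set q := (a + r) / (1 + a * r) with hqdef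
  set p := (a - r) / (1 - a * r) with hpdef
  have hq1 : -1 < q ∧ q < 1 := by
    constructor
    · rw [hqdef, lt_div_iff₀ harpos]; nlinarith [hab.1, hab.2]
    · rw [hqdef, div_lt_one harpos]; nlinarith [hab.1, hab.2]
  have hp1 : -1 < p ∧ p < 1 := by
    constructor
    · rw [hpdef, lt_div_iff₀ harpos']; nlinarith [hab.1, hab.2]
    · rw [hpdef, div_lt_one harpos']; nlinarith [hab.1, hab.2]
  have hartq : artanh a + artanh r = artanh q := by
    rw [hqdef]; exact artanh_add hab.1 hab.2 (by linarith) hr2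
  have hartp : artanh a - artanh r = artanh p := by
    have h := artanh_add hab.1 hab.2 (show -1 < -r by linarith) (show -r < 1 by linarith)
    rw [artanh_neg] at h
    have he : (a + -r) / (1 + a * -r) = p := by rw [hpdef]; ring_nf
    rw [he] at h
    linarith [h]
  have hlog : Real.log ((1 + r) / (1 - r)) = 2 * artanh r := by unfold artanh; ring
  set A := (4 / Real.pi) * Real.arctan p with hAdef
  set B := (4 / Real.pi) * Real.arctan q with hBdef
  have harcq : Real.arctan q = B * Real.pi / 4 := by
    rw [hBdef]; field_simp
  have harcp : Real.arctan p = A * Real.pi / 4 := by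
    rw [hAdef]; field_simp
  have hBmem : -1 < B ∧ B < 1 := by
    have h1 : Real.arctan q < Real.pi / 4 := by
      rw [show Real.pi / 4 = Real.arctan 1 by rw [Real.arctan_one]]
      exact Real.arctan_strictMono hq1.2
    have h2 : -(Real.pi / 4) < Real.arctan q := by
      rw [show -(Real.pi / 4) = Real.arctan (-1) by rw [Real.arctan_neg, Real.arctan_one]]
      exact Real.arctan_strictMono hq1.1
    constructor
    · have h3 : (-1) * Real.pi < B * Real.pi := by nlinarith [harcq]
      exact (mul_lt_mul_iff_left₀ hpi).mp h3
    · have h3 : B * Real.pi < 1 * Real.pi := by nlinarith [harcq]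
      exact (mul_lt_mul_iff_left₀ hpi).mp h3
  have hAmem : -1 < A ∧ A < 1 := by
    have h1 : Real.arctan p < Real.pi / 4 := by
      rw [show Real.pi / 4 = Real.arctan 1 by rw [Real.arctan_one]]
      exact Real.arctan_strictMono hp1.2
    have h2 : -(Real.pi / 4) < Real.arctan p := by
      rw [show -(Real.pi / 4) = Real.arctan (-1) by rw [Real.arctan_neg, Real.arctan_one]]
      exact Real.arctan_strictMono hp1.1
    constructor
    · have h3 : (-1) * Real.pi < A * Real.pi := by nlinarith [harcp]
      exact (mul_lt_mul_iff_left₀ hpi).mp h3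
    · have h3 : A * Real.pi < 1 * Real.pi := by nlinarith [harcp]
      exact (mul_lt_mul_iff_left₀ hpi).mp h3
  have key : ∀ x : ℝ, -1 < x → x < 1 → (|Lam b - Lam x| ≤ 2 * artanh r ↔ (A ≤ x ∧ x ≤ B)) := by
    intro x hx1 hx2
    have htx := tan_bd hx1 hx2
    have hiff1 : Lam x ≤ Lam b + 2 * artanh r ↔ x ≤ B := by
      have e : Lam b + 2 * artanh r = 2 * artanh q := by
        unfold Lam; rw [← ha, ← hartq]; ring
      rw [e]
      unfold Lam
      rw [mul_le_mul_iff_right₀ two_pos, artanh_le_artanh_iff htx.1 htx.2 hq1.1 hq1.2]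
      have harcmem : Real.arctan q ∈ Set.Ioo (-(Real.pi / 2)) (Real.pi / 2) :=
        ⟨Real.neg_pi_div_two_lt_arctan q, Real.arctan_lt_pi_div_two q⟩
      have hiff := Real.strictMonoOn_tan.le_iff_le (angle_mem hx1 hx2) harcmem
      rw [Real.tan_arctan] at hiff
      rw [hiff, harcq]
      rw [div_le_div_iff_of_pos_right (by norm_num : (0:ℝ) < 4), mul_le_mul_iff_left₀ hpi]
    have hiff2 : Lam b - 2 * artanh r ≤ Lam x ↔ A ≤ x := by
      have e : Lam b - 2 * artanh r = 2 * artanh p := by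
        unfold Lam; rw [← ha, ← hartp]; ring
      rw [e]
      unfold Lam
      rw [mul_le_mul_iff_right₀ two_pos, artanh_le_artanh_iff hp1.1 hp1.2 htx.1 htx.2]
      have harcmem : Real.arctan p ∈ Set.Ioo (-(Real.pi / 2)) (Real.pi / 2) :=
        ⟨Real.neg_pi_div_two_lt_arctan p, Real.arctan_lt_pi_div_two p⟩
      have hiff := Real.strictMonoOn_tan.le_iff_le harcmem (angle_mem hx1 hx2)
      rw [Real.tan_arctan] at hiff
      rw [hiff, harcp]
      rw [div_le_div_iff_of_pos_right (by norm_num : (0:ℝ) < 4), mul_le_mul_iff_left₀ hpi]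
    rw [abs_le]
    constructor
    · rintro ⟨hL, hR⟩
      exact ⟨hiff2.1 (by linarith), hiff1.1 (by linarith)⟩
    · rintro ⟨hL, hR⟩
      exact ⟨by linarith [hiff1.2 hR], by linarith [hiff2.2 hL]⟩
  apply Set.eq_of_subset_of_subset
  · rintro y ⟨z, ⟨hzS, hdist⟩, rfl⟩
    obtain ⟨hz1, hz2⟩ := hzS
    have hzS' : z ∈ stripS := ⟨hz1, hz2⟩
    have hlb : |Lam b - Lam z.re| ≤ dS z (b : ℂ) := by
      obtain ⟨γ₀, hγ₀, h00, h01, h0mem⟩ := exists_witness z hzS' b hb1 hb2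
      have hne : Set.Nonempty { L : ℝ | ∃ γ : ℝ → ℂ, ContDiffOn ℝ 1 γ (Set.Icc 0 1) ∧
          γ 0 = z ∧ γ 1 = ((b:ℝ):ℂ) ∧ (∀ t ∈ Set.Icc (0:ℝ) 1, γ t ∈ stripS) ∧
          L = hypLenS γ } := ⟨hypLenS γ₀, ⟨γ₀, hγ₀, h00, h01, h0mem, rfl⟩⟩
      have hds : dS z ((b:ℝ):ℂ) = sInf { L : ℝ | ∃ γ : ℝ → ℂ, ContDiffOn ℝ 1 γ (Set.Icc 0 1) ∧
          γ 0 = z ∧ γ 1 = ((b:ℝ):ℂ) ∧ (∀ t ∈ Set.Icc (0:ℝ) 1, γ t ∈ stripS) ∧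
          L = hypLenS γ } := rfl
      rw [hds]
      refine le_csInf hne ?_
      rintro L ⟨γ, hγ, hg0, hg1, hgmem, rfl⟩
      exact len_lower_bound hzS' hγ hg0 hg1 hgmem
    rw [hlog] at hdist
    exact (key z.re hz1 hz2).1 (by linarith)
  · intro y hy
    have hy1 : -1 < y := lt_of_lt_of_le hAmem.1 hy.1
    have hy2 : y < 1 := lt_of_le_of_lt hy.2 hBmem.2
    obtain ⟨γ, hγ, h0, h1, hmem, hlen⟩ := seg_spec y b hy1 hy2 hb1 hb2
    refine ⟨(y:ℂ), ⟨⟨by simpa using hy1, by simpa using hy2⟩, ?_⟩, Complex.ofReal_re y⟩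
    have hbdd : BddBelow { L : ℝ | ∃ γ : ℝ → ℂ, ContDiffOn ℝ 1 γ (Icc 0 1) ∧ γ 0 = ((y:ℂ)) ∧
        γ 1 = ((b:ℝ):ℂ) ∧ (∀ t ∈ Icc (0:ℝ) 1, γ t ∈ stripS) ∧ L = hypLenS γ } := by
      refine ⟨0, ?_⟩
      rintro L ⟨γ', hγ', _, _, hmem', rfl⟩
      unfold hypLenS
      apply intervalIntegral.integral_nonneg zero_le_one
      intro u hu
      have hu' := hmem' u hu
      exact mul_nonneg (le_of_lt (div_pos (by positivity) (cos_half_pos hu'.1 hu'.2)))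
        (norm_nonneg _)
    have hle := csInf_le hbdd ⟨γ, hγ, h0, h1, hmem, rfl⟩
    rw [hlen] at hle
    have hk := (key y hy1 hy2).2 ⟨hy.1, hy.2⟩
    have hds : dS ((y:ℂ)) ((b:ℝ):ℂ) = sInf { L : ℝ | ∃ γ : ℝ → ℂ, ContDiffOn ℝ 1 γ (Icc 0 1) ∧
        γ 0 = ((y:ℂ)) ∧ γ 1 = ((b:ℝ):ℂ) ∧ (∀ t ∈ Icc (0:ℝ) 1, γ t ∈ stripS) ∧
        L = hypLenS γ } := rfl
    rw [hlog, hds]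
    linarith [hle, hk]
end

section
/- (Schwarz lemma for holomorphic maps into the strip) If f : U → S is holomorphic with f(0) = 0, where S = {z : -1 < Re z < 1}, then |f(z)| ≤ (4/π)·artanh|z| for all z ∈ U. -/
open Complex Set

lemma norm_log_sub_log_le {u : ℂ} (hu : ‖u‖ < 1) :
    ‖Complex.log (1 + u) - Complex.log (1 - u)‖
      ≤ Real.log (1 + ‖u‖) - Real.log (1 - ‖u‖) := by
  set r := ‖u‖ with hr
  have hr0 : 0 ≤ r := norm_nonneg u
  have hA : HasSum (fun n : ℕ => (-1) ^ (n + 1) * u ^ n / n + u ^ n / n)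
      (Complex.log (1 + u) - Complex.log (1 - u)) := by
    simpa [sub_eq_add_neg] using
      (Complex.hasSum_taylorSeries_log hu).add (Complex.hasSum_taylorSeries_neg_log hu)
  have hrC : ‖(r : ℂ)‖ < 1 := by rw [Complex.norm_real, Real.norm_eq_abs, _root_.abs_of_nonneg hr0]; exact hu
  have hBc : HasSum (fun n : ℕ => (-1) ^ (n + 1) * (r : ℂ) ^ n / n + (r : ℂ) ^ n / n)
      (Complex.log (1 + (r : ℂ)) - Complex.log (1 - (r : ℂ))) := by
    simpa [sub_eq_add_neg] using
      (Complex.hasSum_taylorSeries_log hrC).add (Complex.hasSum_taylorSeries_neg_log hrC)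
  have h1r : (0:ℝ) < 1 - r := by linarith [hu]
  have hB : HasSum (fun n : ℕ => (-1 : ℝ) ^ (n + 1) * r ^ n / n + r ^ n / n)
      (Real.log (1 + r) - Real.log (1 - r)) := by
    rw [← Complex.hasSum_ofReal]
    convert hBc using 1
    · ext n; push_cast; ring
    · push_cast [Complex.ofReal_log (by linarith : (0:ℝ) ≤ 1 + r),
        Complex.ofReal_log h1r.le]
      rfl
  have hbound : ∀ n : ℕ, ‖(-1 : ℂ) ^ (n + 1) * u ^ n / n + u ^ n / n‖
      ≤ (-1 : ℝ) ^ (n + 1) * r ^ n / n + r ^ n / n := by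
    intro n
    have hnorm : ‖u ^ n / (n : ℂ)‖ = r ^ n / n := by
      simp [norm_div, norm_pow, hr]
    rcases Nat.even_or_odd n with he | ho
    · have h1 : ((-1 : ℂ)) ^ (n + 1) = -1 := (he.add_one).neg_one_pow
      have h2 : ((-1 : ℝ)) ^ (n + 1) = -1 := (he.add_one).neg_one_pow
      rw [h1, h2]
      simp [neg_div, neg_mul, one_mul]
    · have h1 : ((-1 : ℂ)) ^ (n + 1) = 1 := (ho.add_one).neg_one_pow
      have h2 : ((-1 : ℝ)) ^ (n + 1) = 1 := (ho.add_one).neg_one_pow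
      rw [h1, h2, one_mul, one_mul]
      calc ‖u ^ n / (n : ℂ) + u ^ n / n‖ ≤ ‖u ^ n / (n : ℂ)‖ + ‖u ^ n / (n : ℂ)‖ :=
            norm_add_le _ _
        _ = r ^ n / n + r ^ n / n := by rw [hnorm]
  calc ‖Complex.log (1 + u) - Complex.log (1 - u)‖
      = ‖∑' n : ℕ, ((-1) ^ (n + 1) * u ^ n / n + u ^ n / n)‖ := by rw [hA.tsum_eq]
    _ ≤ Real.log (1 + r) - Real.log (1 - r) := tsum_of_norm_bounded hB hbound


/-- Schwarz lemma for holomorphic maps of the disc into the strip. -/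
theorem schwarz_holomorphic_strip (f : ℂ → ℂ) (hf : DifferentiableOn ℂ f discU)
    (hmap : Set.MapsTo f discU stripS) (h0 : f 0 = 0) :
    ∀ z ∈ discU, ‖f z‖ ≤ (4 / Real.pi) * artanh (‖z‖) := by
  have hpi : (0:ℝ) < Real.pi := Real.pi_pos
  have hdisc : discU = Metric.ball (0:ℂ) 1 := by
    ext w; simp [discU, Metric.mem_ball, Complex.dist_eq]
  set c : ℂ := (↑(Real.pi / 2) : ℂ) * Complex.I with hc
  set G : ℂ → ℂ := fun w => Complex.exp (c * f w) with hG
  -- imaginary part of c * f w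
  have hAim : ∀ w, (c * f w).im = Real.pi / 2 * (f w).re := by
    intro w
    simp [hc, Complex.mul_im, Complex.mul_re]
  have hAim_mem : ∀ w ∈ discU, (c * f w).im ∈ Ioo (-(Real.pi/2)) (Real.pi/2) := by
    intro w hw
    obtain ⟨h1, h2⟩ := hmap hw
    rw [hAim]
    constructor <;> nlinarith
  have hGre : ∀ w ∈ discU, 0 < (G w).re := by
    intro w hw
    rw [hG, Complex.exp_re]
    have := Real.cos_pos_of_mem_Ioo (hAim_mem w hw)
    positivity
  have hGne : ∀ w ∈ discU, G w + 1 ≠ 0 := by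
    intro w hw h
    have := congrArg Complex.re h
    simp at this
    have := hGre w hw
    linarith [this]
  set F : ℂ → ℂ := fun w => (G w - 1) / (G w + 1) with hF
  have hGabs : ∀ w ∈ discU, ‖G w - 1‖ < ‖G w + 1‖ := by
    intro w hw
    have h2 : (‖G w - 1‖)^2 < (‖G w + 1‖)^2 := by
      rw [Complex.sq_norm, Complex.sq_norm, Complex.normSq_apply, Complex.normSq_apply]
      simp only [Complex.sub_re, Complex.sub_im, Complex.add_re, Complex.add_im,
        Complex.one_re, Complex.one_im]
      nlinarith [hGre w hw]
    exact lt_of_pow_lt_pow_left₀ 2 (norm_nonneg _) h2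
  have hFlt : ∀ w ∈ discU, ‖F w‖ < 1 := by
    intro w hw
    rw [hF]
    simp only [norm_div]
    rw [div_lt_one (lt_of_le_of_lt (norm_nonneg _) (hGabs w hw))]
    exact hGabs w hw
  have hGdiff : DifferentiableOn ℂ G discU := (hf.const_mul c).cexp
  have hFdiff : DifferentiableOn ℂ F discU :=
    (hGdiff.sub_const 1).div (hGdiff.add_const 1) hGne
  have hG0 : G 0 = 1 := by rw [hG]; simp [h0]
  have hF0 : F 0 = 0 := by rw [hF]; simp [hG0]
  intro z hz
  have hz1 : ‖z‖ < 1 := hz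
  -- Schwarz lemma
  have hSch : ‖F z‖ ≤ ‖z‖ := by
    apply Complex.norm_le_norm_of_mapsTo_ball (hdisc ▸ hFdiff) _ hF0 hz1
    intro w hw
    rw [← hdisc] at hw
    exact Metric.ball_subset_closedBall (by rw [← hdisc]; exact hFlt w hw)
  set s := ‖F z‖ with hs
  have hsz : s < 1 := hFlt z hz
  have h1pF : (1 : ℂ) + F z ≠ 0 := by
    intro h
    have hFz : F z = -1 := by linear_combination h
    have h' := hFlt z hz
    rw [hFz] at h'; simp at h'
  have h1mF : (1 : ℂ) - F z ≠ 0 := by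
    intro h
    have hFz : F z = 1 := by linear_combination -h
    have h' := hFlt z hz
    rw [hFz] at h'; simp at h'
  -- G z = (1 + F z) / (1 - F z)
  have hGF : G z = (1 + F z) / (1 - F z) := by
    rw [hF]
    field_simp [hGne z hz]
    ring
  set A : ℂ := c * f z with hA
  set B : ℂ := Complex.log (1 + F z) - Complex.log (1 - F z) with hB
  have hexp : Complex.exp A = Complex.exp B := by
    rw [hB, Complex.exp_sub, Complex.exp_log h1pF, Complex.exp_log h1mF, ← hGF, hG]
  have hBim1 : |(Complex.log (1 + F z)).im| < Real.pi / 2 := by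
    rw [Complex.log_im]
    rw [Complex.abs_arg_lt_pi_div_two_iff]
    left
    have := Complex.abs_re_le_norm (F z)
    simp only [Complex.add_re, Complex.one_re]
    cases' abs_le.1 this with h _
    nlinarith [abs_nonneg (F z).re, le_abs_self (F z).re, neg_abs_le (F z).re]
  have hBim2 : |(Complex.log (1 - F z)).im| < Real.pi / 2 := by
    rw [Complex.log_im]
    rw [Complex.abs_arg_lt_pi_div_two_iff]
    left
    have := Complex.abs_re_le_norm (F z)
    simp only [Complex.sub_re, Complex.one_re]
    nlinarith [le_abs_self (F z).re]
  have hAB : A = B := by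
    obtain ⟨n, hn⟩ := Complex.exp_eq_exp_iff_exists_int.1 hexp
    have him : A.im = B.im + n * (2 * Real.pi) := by
      rw [hn]
      simp [Complex.add_im, Complex.mul_im]
    have hAimb : |A.im| < Real.pi / 2 := by
      have := hAim_mem z hz
      rw [abs_lt]; exact ⟨this.1, this.2⟩
    have hBimb : |B.im| < Real.pi := by
      rw [hB]
      calc |(Complex.log (1 + F z)).im - (Complex.log (1 - F z)).im| ≤ _ :=
            abs_sub _ _
        _ < Real.pi := by linarith
    have hn0 : n = 0 := by
      by_contra h
      have h1 : (1:ℝ) ≤ |(n:ℝ)| := by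
        rw [← Int.cast_abs]
        exact_mod_cast Int.one_le_abs (by exact_mod_cast h)
      have : |A.im - B.im| = |(n:ℝ)| * (2 * Real.pi) := by
        rw [him, show B.im + (n:ℝ) * (2 * Real.pi) - B.im = (n:ℝ) * (2 * Real.pi) by ring,
          abs_mul, _root_.abs_of_pos (by linarith : (0:ℝ) < 2 * Real.pi)]
      nlinarith [abs_sub A.im B.im, abs_sub_abs_le_abs_sub A.im B.im]
    rw [hn0] at hn; simpa using hn
  -- norms
  have hnormA : ‖A‖ = Real.pi / 2 * ‖f z‖ := by
    rw [hA, hc, norm_mul, norm_mul, Complex.norm_real, Real.norm_eq_abs, Complex.norm_I,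
      _root_.abs_of_pos (by linarith : (0:ℝ) < Real.pi / 2), mul_one]
  have hkey : ‖B‖ ≤ Real.log (1 + s) - Real.log (1 - s) := by
    rw [hB]
    have := norm_log_sub_log_le (u := F z) hsz
    simpa [← hs] using this
  set r := ‖z‖ with hr
  have hmono : Real.log (1 + s) - Real.log (1 - s)
      ≤ Real.log (1 + r) - Real.log (1 - r) := by
    have hs0 : 0 ≤ s := norm_nonneg _
    have h1 : Real.log (1 + s) ≤ Real.log (1 + r) :=
      Real.log_le_log (by linarith) (by linarith [hSch])
    have h2 : Real.log (1 - r) ≤ Real.log (1 - s) :=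
      Real.log_le_log (by linarith) (by linarith [hSch])
    linarith
  have hfinal : Real.pi / 2 * ‖f z‖ ≤ Real.log (1 + r) - Real.log (1 - r) := by
    rw [← hnormA, hAB]
    exact hkey.trans hmono
  have hart : artanh r = (Real.log (1 + r) - Real.log (1 - r)) / 2 := by
    rw [artanh, Real.log_div (ne_of_gt (by linarith [norm_nonneg z]))
      (ne_of_gt (by linarith))]
  rw [hart]
  calc ‖f z‖ = (2 / Real.pi) * (Real.pi / 2 * ‖f z‖) := by
        field_simp
    _ ≤ (2 / Real.pi) * (Real.log (1 + r) - Real.log (1 - r)) :=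
        mul_le_mul_of_nonneg_left hfinal (by positivity)
    _ = 4 / Real.pi * ((Real.log (1 + r) - Real.log (1 - r)) / 2) := by ring
end

section
/- The bound |f(z)| ≤ (4/π)·artanh|z| for holomorphic f : U → S with f(0)=0 is sharp: for each z ∈ U there is a holomorphic f̂ : U → S with f̂(0)=0 and |f̂(z)| = (4/π)·artanh|z|. -/
open Complex Set

lemma re_pos_of_abs_lt_one {w : ℂ} (hw : ‖w‖ < 1) :
    0 < ((1 - w) / (1 + w)).re := by
  have h2 : Complex.normSq w < 1 := by
    nlinarith [Complex.sq_norm w, norm_nonneg w]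
  have hne : (1 : ℂ) + w ≠ 0 := by
    intro h
    have : w = -1 := by linear_combination h
    rw [this] at hw; simp at hw
  have hns : 0 < Complex.normSq (1 + w) := by
    rwa [Complex.normSq_pos]
  rw [Complex.div_re, ← add_div]
  apply div_pos _ hns
  simp only [Complex.sub_re, Complex.sub_im, Complex.add_re, Complex.add_im,
    Complex.one_re, Complex.one_im]
  simp only [Complex.normSq_apply] at h2
  nlinarith

/-- sharpness of the Schwarz lemma for holomorphic maps into the strip. -/
theorem schwarz_holomorphic_strip_sharp (z : ℂ) (hz : z ∈ discU) :
    ∃ f : ℂ → ℂ, DifferentiableOn ℂ f discU ∧ Set.MapsTo f discU stripS ∧ f 0 = 0 ∧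
      ‖f z‖ = (4 / Real.pi) * artanh (‖z‖) := by
  have hpi : (0 : ℝ) < Real.pi := Real.pi_pos
  set u : ℂ := if z = 0 then 1 else (starRingEnd ℂ z) / ‖z‖ with hu_def
  have habs_u : ‖u‖ = 1 := by
    rw [hu_def]
    split_ifs with h
    · simp
    · have : ‖z‖ ≠ 0 := by simpa using h
      simp [norm_div, Complex.norm_conj, Complex.norm_real,
        _root_.abs_of_nonneg (norm_nonneg z), div_self this]
  set g : ℂ → ℂ := fun ζ => (1 - u * ζ) / (1 + u * ζ) with hg_def
  set f : ℂ → ℂ := fun ζ => ((2 / Real.pi : ℝ) : ℂ) * Complex.I * Complex.log (g ζ) with hf_def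
  -- key positivity of the real part of g on the disc
  have hg_re : ∀ ζ ∈ discU, 0 < (g ζ).re := by
    intro ζ hζ
    apply re_pos_of_abs_lt_one
    rw [norm_mul, habs_u, one_mul]
    exact hζ
  have hg_ne : ∀ ζ ∈ discU, (1 : ℂ) + u * ζ ≠ 0 := by
    intro ζ hζ h
    have : u * ζ = -1 := by linear_combination h
    have := congrArg (‖·‖) this
    rw [norm_mul, habs_u, one_mul] at this
    have : ‖ζ‖ < 1 := hζ
    simp [‹‖ζ‖ = ‖(-1 : ℂ)‖›] at this
  refine ⟨f, ?_, ?_, ?_, ?_⟩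
  · -- differentiability
    intro ζ hζ
    have hgd : DifferentiableAt ℂ g ζ :=
      ((differentiableAt_const _).sub (differentiableAt_id.const_mul u)).div
        ((differentiableAt_const _).add (differentiableAt_id.const_mul u)) (hg_ne ζ hζ)
    exact ((((Complex.differentiableAt_log (Or.inl (hg_re ζ hζ))).comp ζ hgd)).const_mul
      _).differentiableWithinAt
  · -- maps to strip
    intro ζ hζ
    have harg : |Complex.arg (g ζ)| < Real.pi / 2 :=
      Complex.abs_arg_lt_pi_div_two_iff.mpr (Or.inl (hg_re ζ hζ))
    have hre : (f ζ).re = -(2 / Real.pi) * (Complex.log (g ζ)).im := by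
      simp [hf_def, Complex.mul_re, Complex.mul_im]
    have him : (Complex.log (g ζ)).im = Complex.arg (g ζ) := Complex.log_im _
    have key : |(f ζ).re| < 1 := by
      rw [hre, him, abs_mul, abs_neg, _root_.abs_of_nonneg (by positivity : (0:ℝ) ≤ 2 / Real.pi)]
      calc 2 / Real.pi * |Complex.arg (g ζ)| < 2 / Real.pi * (Real.pi / 2) :=
            mul_lt_mul_of_pos_left harg (by positivity)
        _ = 1 := by field_simp
    exact abs_lt.mp key
  · -- f 0 = 0
    simp [hf_def, hg_def]
  · -- the value at z
    by_cases h0 : z = 0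
    · subst h0
      simp [hf_def, hg_def, artanh]
    · set r : ℝ := ‖z‖ with hr_def
      have hr0 : 0 < r := by simpa [hr_def] using norm_pos_iff.mpr h0
      have hr1 : r < 1 := hz
      have hrne : (r : ℂ) ≠ 0 := Complex.ofReal_ne_zero.mpr hr0.ne'
      have huz : u * z = (r : ℂ) := by
        rw [hu_def, if_neg h0, div_mul_eq_mul_div, mul_comm, Complex.mul_conj,
          Complex.normSq_eq_norm_sq, div_eq_iff hrne]
        push_cast
        ring
      have hgz : g z = (((1 - r) / (1 + r) : ℝ) : ℂ) := by
        rw [hg_def]; simp only [huz]; push_cast; ring_nf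
      have hx0 : (0 : ℝ) < (1 - r) / (1 + r) := div_pos (by linarith) (by linarith)
      have hlog : Complex.log (g z) = ((Real.log ((1 - r) / (1 + r)) : ℝ) : ℂ) := by
        rw [hgz, Complex.ofReal_log hx0.le]
      have : f z = ((2 / Real.pi : ℝ) : ℂ) * Complex.I *
          ((Real.log ((1 - r) / (1 + r)) : ℝ) : ℂ) := by rw [hf_def]; simp [hlog]
      rw [this]
      rw [norm_mul, norm_mul, Complex.norm_I, Complex.norm_real, Complex.norm_real, Real.norm_eq_abs, Real.norm_eq_abs]
      have hlogneg : Real.log ((1 - r) / (1 + r)) ≤ 0 := by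
        apply Real.log_nonpos hx0.le
        rw [div_le_one (by linarith)]; linarith
      have hflip : Real.log ((1 - r) / (1 + r)) = -Real.log ((1 + r) / (1 - r)) := by
        rw [← Real.log_inv]
        congr 1
        field_simp
      rw [_root_.abs_of_nonneg (by positivity : (0:ℝ) ≤ 2 / Real.pi), abs_of_nonpos hlogneg,
        hflip]
      simp only [artanh]
      field_simp
      ring
end
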